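/- arXiv:2404.04912 — 15 statements merged into one kernel-verified Lean document; each statement's English description precedes it below -/
import Mathlib

section
/- Let w > 0, r > 0, B > 0 and p ∈ ℝ. Then the function S : ℝ → ℝ defined by S(x) = −(w·r/B)·(x − p) − x³/r is strictly decreasing on ℝ and has exactly one real root m; moreover this root satisfies |m| ≤ |p| and m·p ≥ 0. -/
/-- The self function `S(x) = -(w r / B)(x - p) - x³/r` is strictly decreasing,
has exactly one real root `m`, and this root satisfies `|m| ≤ |p|` and `m · p ≥ 0`. -/
theorem self_function_properties (w r B p : ℝ) (hw : 0 < w) (hr : 0 < r) (hB : 0 < B) :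
    StrictAnti (fun x : ℝ => -(w * r / B) * (x - p) - x ^ 3 / r) ∧
    (∃! m : ℝ, -(w * r / B) * (m - p) - m ^ 3 / r = 0) ∧
    (∀ m : ℝ, -(w * r / B) * (m - p) - m ^ 3 / r = 0 → |m| ≤ |p| ∧ 0 ≤ m * p) := by
  set c : ℝ := w * r / B with hc
  have hcpos : 0 < c := by positivity
  have hanti : StrictAnti (fun x : ℝ => -c * (x - p) - x ^ 3 / r) := by
    intro x y hxy
    have hcube : x ^ 3 < y ^ 3 := Odd.strictMono_pow (by decide) hxy
    have hdiv : x ^ 3 / r < y ^ 3 / r := by gcongr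
    simp only
    nlinarith [mul_pos hcpos (sub_pos.mpr hxy)]
  have hroots : ∀ m : ℝ, -c * (m - p) - m ^ 3 / r = 0 → |m| ≤ |p| ∧ 0 ≤ m * p := by
    intro m hm
    have hm' : c * (p - m) = m ^ 3 / r := by linarith
    rcases le_or_gt 0 m with h0 | h0
    · have h3 : 0 ≤ m ^ 3 / r := by positivity
      have hpm : m ≤ p := by nlinarith
      constructor
      · rw [abs_of_nonneg h0, abs_of_nonneg (le_trans h0 hpm)]; exact hpm
      · exact mul_nonneg h0 (le_trans h0 hpm)
    · have h3 : m ^ 3 / r < 0 := by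
        apply div_neg_of_neg_of_pos _ hr
        exact Odd.pow_neg (by decide) h0
      have hpm : p < m := by nlinarith
      constructor
      · rw [abs_of_neg h0, abs_of_neg (lt_trans hpm h0)]; linarith
      · nlinarith
  have hcont : Continuous (fun x : ℝ => -c * (x - p) - x ^ 3 / r) := by
    continuity
  have hex : ∃ m : ℝ, -c * (m - p) - m ^ 3 / r = 0 := by
    rcases le_or_gt 0 p with hp | hp
    · have h1 : (fun x : ℝ => -c * (x - p) - x ^ 3 / r) p ≤ 0 := by
        have hd : (0:ℝ) ≤ p ^ 3 / r := by positivity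
        simp only; nlinarith
      have h2 : 0 ≤ (fun x : ℝ => -c * (x - p) - x ^ 3 / r) 0 := by
        simp only
        have : -c * (0 - p) - 0 ^ 3 / r = c * p := by ring
        rw [this]; positivity
      have := intermediate_value_Icc' hp (hcont.continuousOn (s := Set.Icc 0 p))
      have hmem : (0 : ℝ) ∈ Set.Icc ((fun x : ℝ => -c * (x - p) - x ^ 3 / r) p)
          ((fun x : ℝ => -c * (x - p) - x ^ 3 / r) 0) := ⟨h1, h2⟩
      obtain ⟨m, _, hm⟩ := this hmem
      exact ⟨m, hm⟩
    · have h1 : (fun x : ℝ => -c * (x - p) - x ^ 3 / r) 0 ≤ 0 := by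
        simp only
        have : -c * (0 - p) - 0 ^ 3 / r = c * p := by ring
        rw [this]
        exact mul_nonpos_of_nonneg_of_nonpos hcpos.le hp.le
      have h2 : 0 ≤ (fun x : ℝ => -c * (x - p) - x ^ 3 / r) p := by
        simp only; rw [sub_self, mul_zero]
        have hp3 : p ^ 3 < 0 := Odd.pow_neg (by decide) hp
        have : p ^ 3 / r < 0 := div_neg_of_neg_of_pos hp3 hr
        linarith
      have := intermediate_value_Icc' hp.le (hcont.continuousOn (s := Set.Icc p 0))
      have hmem : (0 : ℝ) ∈ Set.Icc ((fun x : ℝ => -c * (x - p) - x ^ 3 / r) 0)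
          ((fun x : ℝ => -c * (x - p) - x ^ 3 / r) p) := ⟨h1, h2⟩
      obtain ⟨m, _, hm⟩ := this hmem
      exact ⟨m, hm⟩
  refine ⟨hanti, ?_, hroots⟩
  obtain ⟨m, hm⟩ := hex
  refine ⟨m, hm, fun y hy => ?_⟩
  have : (fun x : ℝ => -c * (x - p) - x ^ 3 / r) y =
      (fun x : ℝ => -c * (x - p) - x ^ 3 / r) m := by simp only; rw [hy, hm]
  exact hanti.injective this
end

section
/- There exists ζ ≥ 0 such that for every z ∈ ℝⁿ with (1/2)·∑_{i=1}^n z_i² > ζ one has ∑_{i=1}^n z_i · f_i(z) < 0; that is, the Lyapunov function V(z) = (1/2)‖z‖² is strictly decreasing along the opinion dynamics outside the sublevel set {V ≤ ζ}. -/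
set_option maxHeartbeats 1000000

open Finset

/-- There exists `ζ ≥ 0` such that the Lyapunov function `V(z) = ½‖z‖²` strictly
decreases along the opinion dynamics outside the sublevel set `{V ≤ ζ}`. -/
theorem lyapunov_decrease_outside_sublevel_set
    (n : ℕ) (p w r : Fin n → ℝ) (a : Fin n → Fin n → ℝ)
    (hw : ∀ i, 0 < w i) (hr : ∀ i, 0 < r i)
    (B : ℝ) (hB : B = ∑ k, r k)
    (f : (Fin n → ℝ) → Fin n → ℝ)
    (hf : ∀ z i, f z i =
      -(w i * r i / B) * (z i - p i) + (∑ k, (a i k * r k / B) * (z k - z i))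
        - (z i) ^ 3 / r i) :
    ∃ ζ : ℝ, 0 ≤ ζ ∧ ∀ z : Fin n → ℝ,
      ζ < (1 / 2) * ∑ i, (z i) ^ 2 → (∑ i, z i * f z i) < 0 := by
  rcases Nat.eq_zero_or_pos n with hn | hn
  · refine ⟨0, le_refl _, fun z hz => absurd hz ?_⟩
    subst hn
    simp
  -- n > 0
  have hBpos : 0 < B := by
    rw [hB]
    exact Finset.sum_pos (fun i _ => hr i)
      (by simp [Finset.univ_nonempty_iff, Fin.pos_iff_nonempty.mp hn])
  have hrB : ∀ i, r i ≤ B := by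
    intro i
    rw [hB]
    exact Finset.single_le_sum (fun j _ => (hr j).le) (mem_univ i)
  set D : ℝ := ∑ i, (w i * r i / B) * |p i| with hD_def
  set M : ℝ := ∑ i, ∑ k, |a i k| * (r k / B) with hM_def
  have hD : 0 ≤ D := Finset.sum_nonneg fun i _ => by
    have := div_pos (mul_pos (hw i) (hr i)) hBpos
    positivity
  have hM : 0 ≤ M := Finset.sum_nonneg fun i _ =>
    Finset.sum_nonneg fun k _ => by
      have := div_pos (hr k) hBpos
      positivity
  set N : ℝ := (n : ℝ) * B with hN_def
  have hNpos : 0 < N := mul_pos (by exact_mod_cast hn) hBpos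
  have hND : 0 ≤ N * (D + 4 * M + 1) := mul_nonneg hNpos.le (by linarith)
  refine ⟨(N * (D + 4 * M + 1) + D + 1) / 2, by linarith, fun z hz => ?_⟩
  set S : ℝ := ∑ i, (z i) ^ 2 with hS_def
  have hS1 : N * (D + 4 * M + 1) + D + 1 < S := by linarith
  have hSnn : 0 ≤ S := Finset.sum_nonneg fun i _ => sq_nonneg _
  have hzS : ∀ j, (z j) ^ 2 ≤ S := fun j =>
    Finset.single_le_sum (fun i _ => sq_nonneg (z i)) (mem_univ j)
  set Q : ℝ := ∑ i, (z i) ^ 4 with hQ_def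
  have hQnn : 0 ≤ Q := Finset.sum_nonneg fun i _ => by positivity
  -- main sum bound
  have hbound : (∑ i, z i * f z i) ≤ D * (1 + S) + M * (4 * S) - Q / B := by
    have key : ∀ i : Fin n, z i * f z i ≤
        (w i * r i / B) * |p i| * (1 + S) + (∑ k, |a i k| * (r k / B)) * (4 * S)
          - (z i) ^ 4 / B := by
      intro i
      rw [hf]
      have hc : 0 ≤ w i * r i / B := (div_pos (mul_pos (hw i) (hr i)) hBpos).le
      -- piece 1
      have h1 : z i * (-(w i * r i / B) * (z i - p i)) ≤ (w i * r i / B) * |p i| * (1 + S) := by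
        have habs : p i * z i ≤ |p i| * (1 + S) := by
          calc p i * z i ≤ |p i * z i| := le_abs_self _
            _ = |p i| * |z i| := abs_mul _ _
            _ ≤ |p i| * (1 + S) := by
                apply mul_le_mul_of_nonneg_left _ (abs_nonneg _)
                nlinarith [sq_nonneg (|z i| - 1), sq_abs (z i), hzS i]
        nlinarith [mul_le_mul_of_nonneg_left habs hc, mul_nonneg hc (sq_nonneg (z i))]
      -- piece 2
      have h2 : z i * (∑ k, (a i k * r k / B) * (z k - z i)) ≤
          (∑ k, |a i k| * (r k / B)) * (4 * S) := by
        calc z i * (∑ k, (a i k * r k / B) * (z k - z i))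
            = ∑ k, z i * ((a i k * r k / B) * (z k - z i)) := Finset.mul_sum _ _ _
          _ ≤ ∑ k, (|a i k| * (r k / B)) * (4 * S) := by
              apply Finset.sum_le_sum
              intro k _
              have hx : |z i * (z k - z i)| ≤ 4 * S := by
                rw [abs_le]
                constructor <;>
                  nlinarith [hzS i, hzS k, sq_nonneg (z i + z k), sq_nonneg (z i - z k), hSnn]
              calc z i * ((a i k * r k / B) * (z k - z i))
                  = (a i k * r k / B) * (z i * (z k - z i)) := by ring
                _ ≤ |(a i k * r k / B) * (z i * (z k - z i))| := le_abs_self _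
                _ = |a i k| * (r k / B) * |z i * (z k - z i)| := by
                    rw [abs_mul, abs_div, abs_mul, abs_of_pos (hr k), abs_of_pos hBpos,
                      mul_div_assoc]
                _ ≤ |a i k| * (r k / B) * (4 * S) := by
                    apply mul_le_mul_of_nonneg_left hx
                    have := div_pos (hr k) hBpos
                    positivity
          _ = (∑ k, |a i k| * (r k / B)) * (4 * S) := (Finset.sum_mul _ _ _).symm
      -- piece 3
      have h3 : (z i) ^ 4 / B ≤ z i * ((z i) ^ 3 / r i) := by
        have h4 : (z i) ^ 4 / B ≤ (z i) ^ 4 / r i := by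
          have h0 : (0:ℝ) ≤ (z i) ^ 4 := by positivity
          rw [div_le_div_iff₀ hBpos (hr i)]
          exact mul_le_mul_of_nonneg_left (hrB i) h0
        calc (z i) ^ 4 / B ≤ (z i) ^ 4 / r i := h4
          _ = z i * ((z i) ^ 3 / r i) := by ring
      calc z i * (-(w i * r i / B) * (z i - p i) + (∑ k, (a i k * r k / B) * (z k - z i))
              - (z i) ^ 3 / r i)
          = z i * (-(w i * r i / B) * (z i - p i))
            + z i * (∑ k, (a i k * r k / B) * (z k - z i))
            - z i * ((z i) ^ 3 / r i) := by ring
        _ ≤ (w i * r i / B) * |p i| * (1 + S) + (∑ k, |a i k| * (r k / B)) * (4 * S)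
            - (z i) ^ 4 / B := by linarith
    calc (∑ i, z i * f z i)
        ≤ ∑ i, ((w i * r i / B) * |p i| * (1 + S) + (∑ k, |a i k| * (r k / B)) * (4 * S)
            - (z i) ^ 4 / B) := Finset.sum_le_sum fun i _ => key i
      _ = D * (1 + S) + M * (4 * S) - Q / B := by
          rw [Finset.sum_sub_distrib, Finset.sum_add_distrib, ← Finset.sum_mul,
            ← Finset.sum_mul, ← Finset.sum_div]
  -- Cauchy-Schwarz: S^2 ≤ n * Q
  have hCS : S ^ 2 ≤ (n : ℝ) * Q := by
    have h := sq_sum_le_card_mul_sum_sq (s := (univ : Finset (Fin n))) (f := fun i => (z i) ^ 2)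
    simp only [Finset.card_univ, Fintype.card_fin] at h
    calc S ^ 2 = (∑ i, (z i) ^ 2) ^ 2 := by rw [hS_def]
      _ ≤ (n : ℝ) * ∑ i, ((z i) ^ 2) ^ 2 := by exact_mod_cast h
      _ = (n : ℝ) * Q := by rw [hQ_def]; norm_num [← pow_mul]
  have hQB : S ^ 2 / N ≤ Q / B := by
    rw [div_le_div_iff₀ hNpos hBpos, hN_def,
      show Q * ((n:ℝ) * B) = ((n:ℝ) * Q) * B by ring]
    exact mul_le_mul_of_nonneg_right hCS hBpos.le
  clear_value D M N S Q
  have hfinal : D * (1 + S) + M * (4 * S) - Q / B < 0 := by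
    have hSpos : (0:ℝ) < S := by linarith
    have hkey : N * (D + D * S + 4 * M * S) < S * S := by
      nlinarith [mul_pos (by linarith : (0:ℝ) < S - N * (D + 4 * M + 1)) hSpos,
        mul_nonneg hNpos.le (by linarith : (0:ℝ) ≤ S - D)]
    have h5 : D + D * S + 4 * M * S < S ^ 2 / N := by
      rw [lt_div_iff₀ hNpos]
      nlinarith
    linarith [hQB]
  linarith
end

section
/- (Ultimate boundedness of opinions) There exists η ≥ 0, depending only on the parameters (p_i, w_i, r_i, a_{ik}) and not on the initial condition, such that for every solution z of the opinion dynamics there exists T ≥ 0 with |z_i(t)| ≤ η for all i ∈ {1,…,n} and all t ≥ T. -/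
open Finset

set_option maxHeartbeats 1000000 in
/-- Ultimate boundedness of opinions: there exists `η ≥ 0`, independent of the
initial condition, such that every solution of the opinion dynamics eventually
satisfies `|z_i(t)| ≤ η` for all agents `i`. -/
theorem ultimate_boundedness_of_opinions
    (n : ℕ) (p w r : Fin n → ℝ) (a : Fin n → Fin n → ℝ)
    (hw : ∀ i, 0 < w i) (hr : ∀ i, 0 < r i)
    (B : ℝ) (hB : B = ∑ k, r k)
    (f : (Fin n → ℝ) → Fin n → ℝ)
    (hf : ∀ z i, f z i =
      -(w i * r i / B) * (z i - p i) + (∑ k, (a i k * r k / B) * (z k - z i))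
        - (z i) ^ 3 / r i) :
    ∃ η : ℝ, 0 ≤ η ∧ ∀ z : ℝ → Fin n → ℝ,
      (∀ i, Differentiable ℝ (fun t => z t i)) →
      (∀ t : ℝ, 0 ≤ t → ∀ i, HasDerivAt (fun s => z s i) (f (z t) i) t) →
      ∃ T : ℝ, 0 ≤ T ∧ ∀ i, ∀ t : ℝ, T ≤ t → |z t i| ≤ η := by
  rcases Nat.eq_zero_or_pos n with rfl | hn
  · exact ⟨0, le_rfl, fun z _ _ => ⟨0, le_rfl, fun i => i.elim0⟩⟩
  haveI : Nonempty (Fin n) := Fin.pos_iff_nonempty.mp hn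
  have hB0 : 0 < B := hB ▸ Finset.sum_pos (fun i _ => hr i) univ_nonempty
  set C1 : ℝ := ∑ i, (w i * r i ^ 2 / B) * (p i) ^ 2 with hC1def
  set C2 : ℝ := (∑ i, w i * r i ^ 2 / B) + (∑ i, ∑ k, |a i k| * r i * r k / B) * 4
    with hC2def
  have hci : ∀ i, 0 ≤ w i * r i ^ 2 / B :=
    fun i => div_nonneg (mul_nonneg (hw i).le (sq_nonneg _)) hB0.le
  have hdik : ∀ i k, 0 ≤ |a i k| * r i * r k / B :=
    fun i k => div_nonneg (mul_nonneg (mul_nonneg (abs_nonneg _) (hr i).le) (hr k).le) hB0.le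
  have hC1 : 0 ≤ C1 :=
    Finset.sum_nonneg fun i _ => mul_nonneg (hci i) (sq_nonneg _)
  have hC2 : 0 ≤ C2 :=
    add_nonneg (Finset.sum_nonneg fun i _ => hci i)
      (mul_nonneg (Finset.sum_nonneg fun i _ => Finset.sum_nonneg fun k _ => hdik i k)
        (by norm_num))
  set S0 : ℝ := max 1 ((n : ℝ) * (C1 + C2 + 1) / 2) with hS0def
  have hS01 : (1 : ℝ) ≤ S0 := le_max_left _ _
  set K : ℝ := B * S0 with hKdef
  have hK0 : 0 < K := mul_pos hB0 (lt_of_lt_of_le one_pos hS01)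
  have hn1 : (1 : ℝ) ≤ (n : ℝ) := by exact_mod_cast hn
  clear_value C1 C2 S0 K
  -- key algebraic estimate
  have key : ∀ s : Fin n → ℝ, K ≤ ∑ i, r i * (s i) ^ 2 →
      (∑ i, r i * (2 * s i * f s i)) ≤ -1 := by
    intro s hKs
    set S : ℝ := ∑ i, (s i) ^ 2 with hSdef
    have hSi : ∀ i, (s i) ^ 2 ≤ S :=
      fun i => Finset.single_le_sum (fun k _ => sq_nonneg (s k)) (mem_univ i)
    have hS0 : 0 ≤ S := Finset.sum_nonneg fun i _ => sq_nonneg _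
    have hSS0 : S0 ≤ S := by
      have h1 : ∑ i, r i * (s i) ^ 2 ≤ B * S := by
        rw [hSdef, Finset.mul_sum]
        apply Finset.sum_le_sum
        intro i _
        apply mul_le_mul_of_nonneg_right _ (sq_nonneg _)
        rw [hB]
        exact Finset.single_le_sum (fun k _ => (hr k).le) (mem_univ i)
      have h2 : B * S0 ≤ B * S := le_trans (by rw [← hKdef]; exact hKs) h1
      exact le_of_mul_le_mul_left h2 hB0
    have hS1 : (1 : ℝ) ≤ S := le_trans hS01 hSS0
    have hS2 : (n : ℝ) * (C1 + C2 + 1) ≤ 2 * S := by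
      have h := le_trans ((le_max_right 1 ((n : ℝ) * (C1 + C2 + 1) / 2)).trans_eq hS0def.symm) hSS0
      linarith
    set Q : ℝ := ∑ i, ((s i) ^ 2) ^ 2 with hQdef
    have hQ : S ^ 2 ≤ (n : ℝ) * Q := by
      have := sq_sum_le_card_mul_sum_sq (s := (univ : Finset (Fin n)))
        (f := fun i => (s i) ^ 2)
      simpa [hSdef, hQdef] using this
    -- termwise bound
    have hterm : ∀ i ∈ (univ : Finset (Fin n)), r i * (2 * s i * f s i) ≤
        (w i * r i ^ 2 / B) * (p i) ^ 2 + ((w i * r i ^ 2 / B) * S +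
          ((∑ k, |a i k| * r i * r k / B) * (4 * S) - 2 * ((s i) ^ 2) ^ 2)) := by
      intro i _
      have split : r i * (2 * s i * f s i) =
          (w i * r i ^ 2 / B) * (2 * s i * p i - 2 * (s i) ^ 2) +
            (∑ k, (a i k * r i * r k / B) * (2 * s i * (s k - s i))) -
            r i * (2 * s i * ((s i) ^ 3 / r i)) := by
        rw [hf]
        have hsum : r i * (2 * s i * (∑ k, (a i k * r k / B) * (s k - s i))) =
            ∑ k, (a i k * r i * r k / B) * (2 * s i * (s k - s i)) := by
          rw [Finset.mul_sum, Finset.mul_sum]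
          exact Finset.sum_congr rfl fun k _ => by ring
        rw [← hsum]
        ring
      have hcube : r i * (2 * s i * ((s i) ^ 3 / r i)) = 2 * ((s i) ^ 2) ^ 2 := by
        have hdm : (s i) ^ 3 / r i * r i = (s i) ^ 3 := div_mul_cancel₀ _ (hr i).ne'
        calc r i * (2 * s i * ((s i) ^ 3 / r i)) = (s i) ^ 3 / r i * r i * (2 * s i) := by ring
          _ = (s i) ^ 3 * (2 * s i) := by rw [hdm]
          _ = 2 * ((s i) ^ 2) ^ 2 := by ring
      have hT1 : (w i * r i ^ 2 / B) * (2 * s i * p i - 2 * (s i) ^ 2) ≤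
          (w i * r i ^ 2 / B) * ((p i) ^ 2 + (s i) ^ 2) := by
        apply mul_le_mul_of_nonneg_left _ (hci i)
        nlinarith [sq_nonneg (p i - s i), sq_nonneg (s i)]
      have hT2 : (∑ k, (a i k * r i * r k / B) * (2 * s i * (s k - s i))) ≤
          ∑ k, (|a i k| * r i * r k / B) * (4 * S) := by
        apply Finset.sum_le_sum
        intro k _
        have habs : |2 * s i * (s k - s i)| ≤ 3 * (s i) ^ 2 + (s k) ^ 2 := by
          rw [abs_le]
          constructor
          · nlinarith [sq_nonneg (s i + s k)]
          · nlinarith [sq_nonneg (s i - s k), sq_nonneg (s i)]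
        calc (a i k * r i * r k / B) * (2 * s i * (s k - s i))
            ≤ |(a i k * r i * r k / B) * (2 * s i * (s k - s i))| := le_abs_self _
          _ = |a i k * r i * r k / B| * |2 * s i * (s k - s i)| := abs_mul _ _
          _ = (|a i k| * r i * r k / B) * |2 * s i * (s k - s i)| := by
              rw [abs_div, abs_mul, abs_mul, abs_of_pos (hr i), abs_of_pos (hr k),
                abs_of_pos hB0]
          _ ≤ (|a i k| * r i * r k / B) * (4 * S) := by
              apply mul_le_mul_of_nonneg_left _ (hdik i k)
              have h1 := hSi i
              have h2 := hSi k
              linarith [habs]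
      rw [split, hcube]
      have := hT1
      have h3 : (w i * r i ^ 2 / B) * (s i) ^ 2 ≤ (w i * r i ^ 2 / B) * S :=
        mul_le_mul_of_nonneg_left (hSi i) (hci i)
      have h4 : (∑ k, (|a i k| * r i * r k / B) * (4 * S)) =
          (∑ k, |a i k| * r i * r k / B) * (4 * S) := by
        rw [Finset.sum_mul]
      linarith [hT2, h4 ▸ hT2]
    have hsum_le := Finset.sum_le_sum hterm
    rw [Finset.sum_add_distrib, Finset.sum_add_distrib, Finset.sum_sub_distrib,
      ← Finset.sum_mul, ← Finset.sum_mul, ← Finset.mul_sum, ← hQdef, ← hC1def] at hsum_le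
    -- now: ∑ ≤ C1 + (∑ ci) * S + (∑∑|d|) * (4S) - 2Q
    have hfin : C1 + ((∑ i, w i * r i ^ 2 / B) * S +
        ((∑ i, ∑ k, |a i k| * r i * r k / B) * (4 * S) - 2 * Q)) ≤ -1 := by
      have hQ2 : (C1 + C2 + 1) * S ≤ 2 * Q := by
        have h1 : (n : ℝ) * ((C1 + C2 + 1) * S) ≤ (n : ℝ) * (2 * Q) := by
          calc (n : ℝ) * ((C1 + C2 + 1) * S) = ((n : ℝ) * (C1 + C2 + 1)) * S := by ring
            _ ≤ (2 * S) * S := mul_le_mul_of_nonneg_right hS2 hS0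
            _ = 2 * S ^ 2 := by ring
            _ ≤ 2 * ((n : ℝ) * Q) := by linarith [hQ]
            _ = (n : ℝ) * (2 * Q) := by ring
        exact le_of_mul_le_mul_left h1 (lt_of_lt_of_le one_pos hn1)
      have hsplit : C2 * S = (∑ i, w i * r i ^ 2 / B) * S +
          (∑ i, ∑ k, |a i k| * r i * r k / B) * (4 * S) := by
        rw [hC2def]; ring
      nlinarith [mul_le_mul_of_nonneg_left hS1 (by linarith : (0:ℝ) ≤ C1 + 1)]
    calc ∑ i, r i * (2 * s i * f s i) ≤ _ := hsum_le
      _ ≤ -1 := hfin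
  -- the Lyapunov function
  set η : ℝ := ∑ i, Real.sqrt (K / r i) with hηdef
  have hη0 : 0 ≤ η := Finset.sum_nonneg fun i _ => Real.sqrt_nonneg _
  refine ⟨η, hη0, fun z hzdiff hzode => ?_⟩
  set V : ℝ → ℝ := fun t => ∑ i, r i * (z t i) ^ 2 with hVdef
  set g : ℝ → ℝ := fun t => ∑ i, r i * (2 * z t i * f (z t) i) with hgdef
  have hVc : Continuous V := by
    apply continuous_finset_sum
    intro i _
    exact continuous_const.mul ((hzdiff i).continuous.pow 2)
  have hderiv : ∀ t, 0 ≤ t → HasDerivAt V (g t) t := by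
    intro t ht
    have h : ∀ i ∈ (univ : Finset (Fin n)),
        HasDerivAt (fun s => r i * (z s i) ^ 2) (r i * (2 * z t i * f (z t) i)) t := by
      intro i _
      have h1 := ((hzode t ht i).fun_pow 2).const_mul (r i)
      refine h1.congr_deriv ?_
      push_cast
      ring
    exact HasDerivAt.fun_sum h
  have hV00 : 0 ≤ V 0 := Finset.sum_nonneg fun i _ => mul_nonneg (hr i).le (sq_nonneg _)
  set T0 : ℝ := V 0 with hT0def
  -- V reaches K on [0, T0]
  have hex : ∃ t1, t1 ∈ Set.Icc (0:ℝ) T0 ∧ V t1 ≤ K := by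
    by_contra hcon
    push_neg at hcon
    have hcomp := image_le_of_deriv_right_le_deriv_boundary (f := V) (f' := g)
      (a := 0) (b := T0) hVc.continuousOn
      (fun x hx => (hderiv x hx.1).hasDerivWithinAt)
      (B := fun t => V 0 - t) (B' := fun _ => -1) (by simp)
      ((continuous_const.sub continuous_id).continuousOn)
      (fun x _ => (((hasDerivAt_id x).const_sub (V 0)).hasDerivWithinAt))
      (fun x hx => key (z x) (hcon x ⟨hx.1, hx.2.le⟩).le)
    have h1 := hcomp (Set.right_mem_Icc.mpr hV00)
    have h2 := hcon T0 (Set.right_mem_Icc.mpr hV00)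
    linarith
  obtain ⟨t1, ⟨ht10, ht1T⟩, ht1K⟩ := hex
  -- invariance
  have hinv : ∀ t, t1 ≤ t → V t ≤ K := by
    intro t ht
    have hcomp := image_le_of_deriv_right_lt_deriv_boundary (f := V) (f' := g)
      (a := t1) (b := t) hVc.continuousOn
      (fun x hx => (hderiv x (le_trans ht10 hx.1)).hasDerivWithinAt)
      (B := fun _ => K) (B' := fun _ => 0) ht1K
      (fun x => hasDerivAt_const x K)
      (fun x _ hVx => by
        have h1 : g x ≤ -1 := key (z x) (le_of_eq hVx.symm)
        exact lt_of_le_of_lt h1 (by norm_num))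
    exact hcomp (Set.right_mem_Icc.mpr ht)
  refine ⟨T0, hV00, fun i t ht => ?_⟩
  have hVt : V t ≤ K := hinv t (le_trans ht1T ht)
  have h1 : r i * (z t i) ^ 2 ≤ K := by
    refine le_trans ?_ hVt
    exact Finset.single_le_sum (fun k _ => mul_nonneg (hr k).le (sq_nonneg _)) (mem_univ i)
  have h2 : (z t i) ^ 2 ≤ K / r i := by
    rw [le_div_iff₀ (hr i)]
    linarith
  have h3 : |z t i| ≤ Real.sqrt (K / r i) := by
    rw [← Real.sqrt_sq_eq_abs]
    exact Real.sqrt_le_sqrt h2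
  refine le_trans h3 ?_
  rw [hηdef]
  exact Finset.single_le_sum (f := fun k => Real.sqrt (K / r k)) (fun k _ => Real.sqrt_nonneg _) (mem_univ i)
end

section
/- (Convergence of opinions of socially closed agents) Let i ∈ {1,…,n} be a socially closed agent, i.e. a_{ik} = 0 for all k ≠ i. Then for every solution z of the opinion dynamics, z_i(t) → m_i as t → ∞, where m_i is the unique real root of the self function S_i. -/
open Finset

/-- Convergence of opinions of socially closed agents: if agent `i` satisfies
`a i k = 0` for all `k ≠ i`, then along every solution of the opinion dynamics
`z i (t) → m i`, the unique real root of its self function. -/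
theorem socially_closed_agent_converges
    (n : ℕ) (p w r : Fin n → ℝ) (a : Fin n → Fin n → ℝ)
    (hw : ∀ i, 0 < w i) (hr : ∀ i, 0 < r i)
    (B : ℝ) (hB : B = ∑ k, r k)
    (f : (Fin n → ℝ) → Fin n → ℝ)
    (hf : ∀ z i, f z i =
      -(w i * r i / B) * (z i - p i) + (∑ k, (a i k * r k / B) * (z k - z i))
        - (z i) ^ 3 / r i)
    (i : Fin n) (hclosed : ∀ k, k ≠ i → a i k = 0)
    (m : ℝ) (hm : -(w i * r i / B) * (m - p i) - m ^ 3 / r i = 0)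
    (z : ℝ → Fin n → ℝ)
    (hdiff : ∀ j, Differentiable ℝ (fun t => z t j))
    (hsol : ∀ t : ℝ, 0 ≤ t → ∀ j, HasDerivAt (fun s => z s j) (f (z t) j) t) :
    Filter.Tendsto (fun t => z t i) Filter.atTop (nhds m) := by
  have hBpos : 0 < B := by
    rw [hB]; exact Finset.sum_pos (fun k _ => hr k) ⟨i, Finset.mem_univ i⟩
  set c : ℝ := w i * r i / B with hc
  have hcpos : 0 < c := div_pos (mul_pos (hw i) (hr i)) hBpos
  have hri : (0:ℝ) < r i := hr i
  set g : ℝ → ℝ := fun t => z t i with hg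
  set S : ℝ → ℝ := fun x => -c * (x - p i) - x ^ 3 / r i with hS
  have hderiv : ∀ t : ℝ, 0 ≤ t → HasDerivAt g (S (g t)) t := by
    intro t ht
    have h := hsol t ht i
    have heq : f (z t) i = S (g t) := by
      rw [hf]
      have hsum : (∑ k, (a i k * r k / B) * (z t k - z t i)) = 0 := by
        apply Finset.sum_eq_zero
        intro k _
        by_cases hk : k = i
        · subst hk; ring
        · rw [hclosed k hk]; ring
      rw [hsum, hS]; ring
    rwa [heq] at h
  have hkey : ∀ x : ℝ, (x - m) * S x ≤ -c * (x - m) ^ 2 := by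
    intro x
    show (x - m) * (-c * (x - p i) - x ^ 3 / r i) ≤ -c * (x - m) ^ 2
    have hid : (x - m) * (-c * (x - p i) - x ^ 3 / r i) + c * (x - m) ^ 2
        = -(((x - m) ^ 2 * (x ^ 2 + x * m + m ^ 2)) / r i) := by
      linear_combination (x - m) * hm
    have hq : 0 ≤ (x - m) ^ 2 * (x ^ 2 + x * m + m ^ 2) :=
      mul_nonneg (sq_nonneg _) (by nlinarith [sq_nonneg (2 * x + m), sq_nonneg m])
    have hq2 : 0 ≤ ((x - m) ^ 2 * (x ^ 2 + x * m + m ^ 2)) / r i := div_nonneg hq hri.le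
    linarith [hid, hq2]
  set V : ℝ → ℝ := fun t => (g t - m) ^ 2 with hV
  set W : ℝ → ℝ := fun t => V t * Real.exp (2 * c * t) with hW
  have hexp : ∀ t : ℝ, HasDerivAt (fun s => Real.exp (2 * c * s))
      (Real.exp (2 * c * t) * (2 * c)) t := by
    intro t
    simpa using ((hasDerivAt_id t).const_mul (2 * c)).exp
  have hWderiv : ∀ t : ℝ, 0 ≤ t → HasDerivAt W
      ((2 * (g t - m) * S (g t) + 2 * c * V t) * Real.exp (2 * c * t)) t := by
    intro t ht
    have hVd : HasDerivAt V (2 * (g t - m) * S (g t)) t := by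
      have h1 : HasDerivAt (fun s => g s - m) (S (g t)) t := (hderiv t ht).sub_const m
      have := h1.fun_pow 2
      simpa using this
    have := hVd.fun_mul (hexp t)
    refine this.congr_deriv ?_
    ring
  have hWanti : AntitoneOn W (Set.Ici (0:ℝ)) := by
    apply antitoneOn_of_deriv_nonpos (convex_Ici 0)
    · exact (((((hdiff i).continuous).sub continuous_const).pow 2).mul
        (Real.continuous_exp.comp (continuous_const.mul continuous_id))).continuousOn
    · exact ((((hdiff i).sub_const m).pow 2).mul
        ((Real.differentiable_exp).comp ((differentiable_id).const_mul (2*c)))).differentiableOn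
    · intro x hx
      rw [interior_Ici] at hx
      rw [(hWderiv x (le_of_lt hx)).deriv]
      have h1 := hkey (g x)
      have h2 : 2 * (g x - m) * S (g x) + 2 * c * V x ≤ 0 := by
        have hVx : V x = (g x - m) ^ 2 := rfl
        rw [hVx]; linarith
      exact mul_nonpos_of_nonpos_of_nonneg h2 (Real.exp_nonneg _)
  have hbound : ∀ t : ℝ, 0 ≤ t → V t ≤ V 0 * Real.exp (-(2 * c * t)) := by
    intro t ht
    have h1 : W t ≤ W 0 := hWanti (Set.self_mem_Ici) ht ht
    have h2 := mul_le_mul_of_nonneg_right h1 (Real.exp_nonneg (-(2 * c * t)))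
    rw [hW] at h2
    simp only [mul_assoc, ← Real.exp_add] at h2
    simpa [mul_assoc] using h2
  have hVtend : Filter.Tendsto V Filter.atTop (nhds 0) := by
    have htend : Filter.Tendsto (fun t : ℝ => V 0 * Real.exp (-(2 * c * t)))
        Filter.atTop (nhds 0) := by
      have h1 : Filter.Tendsto (fun t : ℝ => 2 * c * t) Filter.atTop Filter.atTop :=
        Filter.Tendsto.const_mul_atTop (by positivity) Filter.tendsto_id
      have h2 : Filter.Tendsto (fun t : ℝ => Real.exp (-(2 * c * t)))
          Filter.atTop (nhds 0) := Real.tendsto_exp_neg_atTop_nhds_zero.comp h1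
      simpa using h2.const_mul (V 0)
    refine squeeze_zero' (Filter.Eventually.of_forall fun t => sq_nonneg _) ?_ htend
    filter_upwards [Filter.eventually_ge_atTop (0:ℝ)] with t ht
    exact hbound t ht
  have habs : Filter.Tendsto (fun t => |g t - m|) Filter.atTop (nhds 0) := by
    have := (Real.continuous_sqrt.tendsto 0).comp hVtend
    simpa [Function.comp_def, hV, Real.sqrt_sq_eq_abs] using this
  have hsub : Filter.Tendsto (fun t => g t - m) Filter.atTop (nhds 0) := by
    rw [tendsto_zero_iff_abs_tendsto_zero]
    exact habs
  have := hsub.add (tendsto_const_nhds (x := m))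
  simpa using this
end

section
/- (Existence and uniqueness of a globally exponentially stable equilibrium) Suppose the weak antagonistic relations assumption holds: for every agent i, w_i r_i/B > ∑_{k : a_{ik} < 0} 2|a_{ik}| r_k/B. Then there exists exactly one equilibrium point z* ∈ ℝⁿ (i.e. f(z*) = 0), and there exists α > 0 such that every solution z of the opinion dynamics satisfies ‖z(t) − z*‖_∞ ≤ e^{−α t} · ‖z(0) − z*‖_∞ for all t ≥ 0, where ‖·‖_∞ is the supremum norm on ℝⁿ. -/
set_option maxHeartbeats 1600000
set_option maxRecDepth 8000

open Finset

/-- Existence and uniqueness of a globally exponentially stable equilibrium under the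
weak antagonistic relations assumption. The norm on `Fin n → ℝ` is the sup norm. -/
theorem unique_globally_exponentially_stable_equilibrium
    (n : ℕ) (p w r : Fin n → ℝ) (a : Fin n → Fin n → ℝ)
    (hw : ∀ i, 0 < w i) (hr : ∀ i, 0 < r i)
    (B : ℝ) (hB : B = ∑ k, r k)
    (f : (Fin n → ℝ) → Fin n → ℝ)
    (hf : ∀ z i, f z i =
      -(w i * r i / B) * (z i - p i) + (∑ k, (a i k * r k / B) * (z k - z i))
        - (z i) ^ 3 / r i)
    (hweak : ∀ i, (∑ k ∈ univ.filter (fun k => a i k < 0), 2 * |a i k| * r k / B)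
      < w i * r i / B) :
    ∃ zstar : Fin n → ℝ, f zstar = 0 ∧ (∀ y : Fin n → ℝ, f y = 0 → y = zstar) ∧
      ∃ α : ℝ, 0 < α ∧ ∀ z : ℝ → Fin n → ℝ,
        (∀ j, Differentiable ℝ (fun t => z t j)) →
        (∀ t : ℝ, 0 ≤ t → ∀ j, HasDerivAt (fun s => z s j) (f (z t) j) t) →
        ∀ t : ℝ, 0 ≤ t → ‖z t - zstar‖ ≤ Real.exp (-α * t) * ‖z 0 - zstar‖ := by
  rcases Nat.eq_zero_or_pos n with hn0 | hn
  · -- degenerate case n = 0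
    subst hn0
    have hall : ∀ v : Fin 0 → ℝ, v = 0 := fun v => funext fun i => i.elim0
    refine ⟨0, hall _, fun y _ => hall y, 1, one_pos, ?_⟩
    intro z _ _ t _
    rw [hall (z t - 0), hall (z 0 - 0), norm_zero, mul_zero]
  -- main case
  have huniv : (univ : Finset (Fin n)).Nonempty := ⟨⟨0, hn⟩, Finset.mem_univ _⟩
  have hB0 : 0 < B := hB ▸ Finset.sum_pos (fun i _ => hr i) huniv
  obtain ⟨i₁, -, hi₁⟩ := Finset.exists_min_image univ
    (fun i => w i * r i / B - ∑ k ∈ univ.filter (fun k => a i k < 0), 2 * |a i k| * r k / B)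
    huniv
  set α₀ : ℝ := w i₁ * r i₁ / B
    - ∑ k ∈ univ.filter (fun k => a i₁ k < 0), 2 * |a i₁ k| * r k / B with hα₀def
  clear_value α₀
  have hα₀ : 0 < α₀ := hα₀def ▸ sub_pos.mpr (hweak i₁)
  have hm : ∀ i, α₀ ≤ w i * r i / B
      - ∑ k ∈ univ.filter (fun k => a i k < 0), 2 * |a i k| * r k / B :=
    fun i => hi₁ i (Finset.mem_univ i)
  -- key one-sided estimate
  have hkey : ∀ x y : Fin n → ℝ, ∀ i, (∀ k, |x k - y k| ≤ |x i - y i|) →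
      (x i - y i) * (f x i - f y i) ≤ -α₀ * (x i - y i)^2 := by
    intro x y i hi
    have hC : (x i - y i) * ((∑ k, (a i k * r k / B) * (x k - x i))
          - (∑ k, (a i k * r k / B) * (y k - y i)))
        = ∑ k, (a i k * r k / B) * ((x i - y i) * (x k - y k) - (x i - y i)^2) := by
      rw [← Finset.sum_sub_distrib, Finset.mul_sum]
      exact Finset.sum_congr rfl fun k _ => by ring
    have h1 : (x i - y i) * (f x i - f y i)
        = -(w i * r i / B) * (x i - y i)^2
          + ∑ k, (a i k * r k / B) * ((x i - y i) * (x k - y k) - (x i - y i)^2)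
          - ((x i - y i) * (x i ^ 3 - y i ^ 3)) / r i := by
      rw [hf x i, hf y i]
      linear_combination hC
    have hcub : 0 ≤ ((x i - y i) * (x i ^ 3 - y i ^ 3)) / r i := by
      apply div_nonneg _ (hr i).le
      nlinarith [sq_nonneg (x i + y i), sq_nonneg (x i - y i), sq_nonneg (x i), sq_nonneg (y i)]
    have hsb : ∑ k, (a i k * r k / B) * ((x i - y i) * (x k - y k) - (x i - y i)^2)
        ≤ (∑ k ∈ univ.filter (fun k => a i k < 0), 2 * |a i k| * r k / B) * (x i - y i)^2 := by
      rw [Finset.sum_mul, Finset.sum_filter]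
      apply Finset.sum_le_sum
      intro k _
      have hrk := (hr k).le
      have habs : |(x i - y i) * (x k - y k)| ≤ (x i - y i)^2 := by
        rw [abs_mul]
        calc |x i - y i| * |x k - y k| ≤ |x i - y i| * |x i - y i| :=
              mul_le_mul_of_nonneg_left (hi k) (abs_nonneg _)
          _ = (x i - y i)^2 := by rw [abs_mul_abs_self]; ring
      obtain ⟨hP2, hP1⟩ := abs_le.mp habs
      by_cases h : a i k < 0
      · rw [if_pos h]
        have hc : a i k * r k / B ≤ 0 :=
          div_nonpos_of_nonpos_of_nonneg (mul_nonpos_of_nonpos_of_nonneg h.le hrk) hB0.le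
        have he : 2 * |a i k| * r k / B = -2 * (a i k * r k / B) := by
          rw [abs_of_neg h]; ring
        rw [he]
        nlinarith [mul_nonneg (neg_nonneg.mpr hc)
          (by linarith : (0:ℝ) ≤ (x i - y i) * (x k - y k) + (x i - y i)^2)]
      · rw [if_neg h]
        push_neg at h
        have hc : 0 ≤ a i k * r k / B := div_nonneg (mul_nonneg h hrk) hB0.le
        nlinarith [mul_nonneg hc (by linarith : (0:ℝ) ≤ (x i - y i)^2 - (x i - y i) * (x k - y k))]
    have hfin := mul_le_mul_of_nonneg_right
      (show (∑ k ∈ univ.filter (fun k => a i k < 0), 2 * |a i k| * r k / B)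
          ≤ w i * r i / B - α₀ by linarith [hm i]) (sq_nonneg (x i - y i))
    linarith
  -- setup for the fixed point argument
  set R : ℝ := ‖f 0‖ / α₀ with hRdef0
  have hR0 : 0 ≤ R := div_nonneg (norm_nonneg _) hα₀.le
  have hRdef : ‖f 0‖ = α₀ * R := by rw [hRdef0]; field_simp
  set C : ℝ := ∑ i, (w i * r i / B + (∑ k, |a i k| * r k / B) + 3*R^2/r i) with hCdef
  have hterm : ∀ i, 0 ≤ w i * r i / B + (∑ k, |a i k| * r k / B) + 3*R^2/r i := by
    intro i
    have h1 : 0 ≤ w i * r i / B := div_nonneg (mul_nonneg (hw i).le (hr i).le) hB0.le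
    have h2 : 0 ≤ ∑ k, |a i k| * r k / B :=
      Finset.sum_nonneg fun k _ => div_nonneg (mul_nonneg (abs_nonneg _) (hr k).le) hB0.le
    have h3 : 0 ≤ 3*R^2/r i := div_nonneg (by positivity) (hr i).le
    linarith
  have hC0 : 0 ≤ C := Finset.sum_nonneg fun i _ => hterm i
  set h : ℝ := 1/(1+C) with hhdef
  have hh0 : 0 < h := by positivity
  have hcoord : ∀ x y : Fin n → ℝ, ‖x‖ ≤ R → ‖y‖ ≤ R → ∀ i,
      |(x i + h * f x i) - (y i + h * f y i)| ≤ (1 - h*α₀) * ‖x - y‖ := by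
    intro x y hx hy i
    have hxi : |x i| ≤ R := le_trans (norm_le_pi_norm x i) hx
    have hyi : |y i| ≤ R := le_trans (norm_le_pi_norm y i) hy
    have hdk : ∀ k, |x k - y k| ≤ ‖x - y‖ := fun k => by
      simpa [Real.norm_eq_abs] using norm_le_pi_norm (x - y) k
    have hnd0 : 0 ≤ ‖x - y‖ := norm_nonneg _
    have hK : (∑ k, (a i k * r k / B) * (x k - x i)) - (∑ k, (a i k * r k / B) * (y k - y i))
        = (∑ k, (a i k * r k / B) * (x k - y k)) - (∑ k, (a i k * r k / B)) * (x i - y i) := by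
      rw [Finset.sum_mul, ← Finset.sum_sub_distrib, ← Finset.sum_sub_distrib]
      exact Finset.sum_congr rfl fun k _ => by ring
    have heq : (x i + h * f x i) - (y i + h * f y i)
        = (1 - h*(w i * r i / B + (∑ k, (a i k * r k / B))
            + (x i^2 + x i * y i + y i^2)/r i)) * (x i - y i)
          + h * ∑ k, (a i k * r k / B) * (x k - y k) := by
      rw [hf x i, hf y i]
      linear_combination h * hK
    set A : ℝ := 1 - h*(w i * r i / B + (∑ k, (a i k * r k / B))
        + (x i^2 + x i * y i + y i^2)/r i) with hAdef
    have hq0 : 0 ≤ x i^2 + x i * y i + y i^2 := by nlinarith [sq_nonneg (x i + y i)]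
    have hq3 : x i^2 + x i * y i + y i^2 ≤ 3*R^2 := by
      have h1 : x i * y i ≤ R^2 := by nlinarith [abs_le.mp hxi, abs_le.mp hyi, neg_abs_le (x i), le_abs_self (x i)]
      nlinarith [pow_le_pow_left₀ (abs_nonneg (x i)) hxi 2,
        pow_le_pow_left₀ (abs_nonneg (y i)) hyi 2, sq_abs (x i), sq_abs (y i)]
    have habsb : ∀ k, |a i k * r k / B| = |a i k| * r k / B := fun k => by
      rw [abs_div, abs_mul, abs_of_nonneg (hr k).le, abs_of_pos hB0]
    have hb : (∑ k, (a i k * r k / B)) ≤ ∑ k, |a i k| * r k / B :=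
      Finset.sum_le_sum fun k _ => (le_abs_self _).trans (habsb k).le
    have hA0 : 0 ≤ A := by
      have hsle : w i * r i / B + (∑ k, (a i k * r k / B)) + (x i^2 + x i * y i + y i^2)/r i ≤ C := by
        have hqr : (x i^2 + x i * y i + y i^2)/r i ≤ 3*R^2/r i :=
          (div_le_div_iff_of_pos_right (hr i)).mpr hq3
        have hsingle : w i * r i / B + (∑ k, |a i k| * r k / B) + 3*R^2/r i ≤ C :=
          Finset.single_le_sum (fun j _ => hterm j) (Finset.mem_univ i)
        linarith
      rw [hAdef, hhdef]
      rw [div_mul_eq_mul_div, le_sub_iff_add_le, zero_add, div_le_one (by linarith)]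
      linarith
    have hsplit : ∑ k, (|a i k * r k / B| - a i k * r k / B)
        = ∑ k ∈ univ.filter (fun k => a i k < 0), 2 * |a i k| * r k / B := by
      rw [Finset.sum_filter]
      apply Finset.sum_congr rfl
      intro k _
      by_cases hak : a i k < 0
      · rw [if_pos hak, habsb k, abs_of_neg hak]
        have : a i k * r k / B ≤ 0 :=
          div_nonpos_of_nonpos_of_nonneg (mul_nonpos_of_nonpos_of_nonneg hak.le (hr k).le) hB0.le
        ring
      · rw [if_neg hak]
        push_neg at hak
        have : 0 ≤ a i k * r k / B := div_nonneg (mul_nonneg hak (hr k).le) hB0.le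
        rw [abs_of_nonneg this]
        ring
    -- main coordinate bound
    have hbound : |A * (x i - y i) + h * ∑ k, (a i k * r k / B) * (x k - y k)|
        ≤ (A + h * ∑ k, |a i k| * r k / B) * ‖x - y‖ := by
      calc |A * (x i - y i) + h * ∑ k, (a i k * r k / B) * (x k - y k)|
          ≤ |A * (x i - y i)| + |h * ∑ k, (a i k * r k / B) * (x k - y k)| := abs_add_le _ _
        _ ≤ A * ‖x - y‖ + h * ∑ k, (|a i k| * r k / B) * ‖x - y‖ := by
            apply add_le_add
            · rw [abs_mul, abs_of_nonneg hA0]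
              exact mul_le_mul_of_nonneg_left (hdk i) hA0
            · rw [abs_mul, abs_of_pos hh0]
              apply mul_le_mul_of_nonneg_left _ hh0.le
              calc |∑ k, (a i k * r k / B) * (x k - y k)|
                  ≤ ∑ k, |(a i k * r k / B) * (x k - y k)| := Finset.abs_sum_le_sum_abs _ _
                _ ≤ ∑ k, (|a i k| * r k / B) * ‖x - y‖ := by
                    apply Finset.sum_le_sum
                    intro k _
                    rw [abs_mul, habsb k]
                    exact mul_le_mul_of_nonneg_left (hdk k)
                      (div_nonneg (mul_nonneg (abs_nonneg _) (hr k).le) hB0.le)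
        _ = (A + h * ∑ k, |a i k| * r k / B) * ‖x - y‖ := by
            rw [← Finset.sum_mul]; ring
    have hfinal : A + h * ∑ k, |a i k| * r k / B ≤ 1 - h*α₀ := by
      have e1 : (∑ k, |a i k| * r k / B) - (∑ k, (a i k * r k / B))
          = ∑ k ∈ univ.filter (fun k => a i k < 0), 2 * |a i k| * r k / B := by
        rw [← hsplit, ← Finset.sum_sub_distrib]
        exact Finset.sum_congr rfl fun k _ => by rw [habsb k]
      have hqri : 0 ≤ (x i^2 + x i * y i + y i^2)/r i := div_nonneg hq0 (hr i).le
      have := hm i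
      rw [hAdef]
      nlinarith [hh0.le]
    rw [heq]
    calc |A * (x i - y i) + h * ∑ k, (a i k * r k / B) * (x k - y k)|
        ≤ (A + h * ∑ k, |a i k| * r k / B) * ‖x - y‖ := hbound
      _ ≤ (1 - h*α₀) * ‖x - y‖ := mul_le_mul_of_nonneg_right hfinal hnd0
  -- bounds on the contraction constant
  have hαC : α₀ ≤ C := by
    have h2 : 0 ≤ ∑ k, |a i₁ k| * r k / B :=
      Finset.sum_nonneg fun k _ => div_nonneg (mul_nonneg (abs_nonneg _) (hr k).le) hB0.le
    have h3 : 0 ≤ 3*R^2/r i₁ := div_nonneg (by positivity) (hr i₁).le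
    have h4 : 0 ≤ ∑ k ∈ univ.filter (fun k => a i₁ k < 0), 2 * |a i₁ k| * r k / B :=
      Finset.sum_nonneg fun k _ => div_nonneg
        (mul_nonneg (mul_nonneg (by norm_num) (abs_nonneg _)) (hr k).le) hB0.le
    have h5 : w i₁ * r i₁ / B + (∑ k, |a i₁ k| * r k / B) + 3*R^2/r i₁ ≤ C :=
      Finset.single_le_sum (fun j _ => hterm j) (Finset.mem_univ i₁)
    rw [hα₀def]
    linarith
  have hK0 : 0 ≤ 1 - h*α₀ := by
    have : h * α₀ ≤ 1 := by
      rw [hhdef, one_div, inv_mul_eq_div, div_le_one (by linarith)]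
      linarith
    linarith
  have hK1 : 1 - h*α₀ < 1 := by nlinarith
  -- existence of a zero of f via the Banach fixed point theorem
  have hexists : ∃ zst : Fin n → ℝ, f zst = 0 := by
    set K : ℝ := 1 - h*α₀ with hKdef
    have hnorm : ∀ x y : Fin n → ℝ, ‖x‖ ≤ R → ‖y‖ ≤ R →
        ‖(x + h • f x) - (y + h • f y)‖ ≤ K * ‖x - y‖ := by
      intro x y hx hy
      apply pi_norm_le_iff_of_nonneg (mul_nonneg hK0 (norm_nonneg _)) |>.mpr
      intro i
      have := hcoord x y hx hy i
      simpa [Real.norm_eq_abs, Pi.smul_apply, smul_eq_mul] using this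
    -- mapping property
    have hmap : ∀ x : Fin n → ℝ, ‖x‖ ≤ R → ‖x + h • f x‖ ≤ R := by
      intro x hx
      have h1 : ‖(x + h • f x) - ((0:Fin n → ℝ) + h • f 0)‖ ≤ K * ‖x - 0‖ :=
        hnorm x 0 hx (by simpa using hR0)
      have h2 : ‖(0:Fin n → ℝ) + h • f 0‖ = h * ‖f 0‖ := by
        rw [zero_add, norm_smul, Real.norm_eq_abs, abs_of_pos hh0]
      calc ‖x + h • f x‖ ≤ ‖(x + h • f x) - ((0:Fin n → ℝ) + h • f 0)‖ + ‖(0:Fin n → ℝ) + h • f 0‖ := by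
            have := norm_add_le ((x + h • f x) - ((0:Fin n → ℝ) + h • f 0)) ((0:Fin n → ℝ) + h • f 0)
            simpa using this
        _ ≤ K * ‖x‖ + h * ‖f 0‖ := by rw [sub_zero] at h1; rw [h2]; exact add_le_add h1 le_rfl
        _ ≤ K * R + h * (α₀ * R) := by
            rw [hRdef]
            exact add_le_add (mul_le_mul_of_nonneg_left hx hK0) le_rfl
        _ = R := by rw [hKdef]; ring
    set s := Metric.closedBall (0 : Fin n → ℝ) R with hsdef
    haveI : Nonempty s := ⟨⟨0, Metric.mem_closedBall_self hR0⟩⟩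
    have hclosed : IsClosed s := Metric.isClosed_closedBall
    haveI : CompleteSpace s := hclosed.completeSpace_coe
    set Knn : NNReal := ⟨K, hK0⟩ with hKnn
    set F : s → s := fun x => ⟨(x : Fin n → ℝ) + h • f x,
      mem_closedBall_zero_iff.mpr (hmap x (mem_closedBall_zero_iff.mp x.2))⟩ with hFdef
    have hlip : LipschitzWith Knn F := by
      apply LipschitzWith.of_dist_le_mul
      intro x y
      simp only [Subtype.dist_eq, dist_eq_norm]
      have := hnorm x y (mem_closedBall_zero_iff.mp x.2) (mem_closedBall_zero_iff.mp y.2)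
      exact this
    have hcw : ContractingWith Knn F := by
      constructor
      · rw [← NNReal.coe_lt_one]; exact hK1
      · exact hlip
    let zfix := ContractingWith.fixedPoint F hcw
    have hfix : F zfix = zfix := hcw.fixedPoint_isFixedPt
    refine ⟨(zfix : Fin n → ℝ), ?_⟩
    have : (zfix : Fin n → ℝ) + h • f zfix = zfix := congrArg Subtype.val hfix
    have h0 : h • f (zfix : Fin n → ℝ) = 0 := by
      have := congrArg (fun v => v - (zfix : Fin n → ℝ)) this
      simpa [add_sub_cancel_left] using this
    rcases smul_eq_zero.mp h0 with h' | h'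
    · exact absurd h' hh0.ne'
    · exact h'
  obtain ⟨zstar, hzstar⟩ := hexists
  refine ⟨zstar, hzstar, ?_, α₀, hα₀, ?_⟩
  · -- uniqueness
    intro y hy
    obtain ⟨j, -, hj⟩ := Finset.exists_max_image univ (fun k => |y k - zstar k|) huniv
    have h0 := hkey y zstar j (fun k => hj k (Finset.mem_univ k))
    rw [hy, hzstar] at h0
    simp only [Pi.zero_apply, sub_zero, mul_zero, sub_self] at h0
    have hsq : (y j - zstar j)^2 ≤ 0 := by nlinarith
    have hj0 : |y j - zstar j| = 0 := by
      rw [abs_eq_zero]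
      nlinarith [sq_nonneg (y j - zstar j)]
    funext k
    have := (hj k (Finset.mem_univ k)).trans hj0.le
    exact sub_eq_zero.mp (abs_nonpos_iff.mp this)
  · -- global exponential stability
    intro z hdiff hderiv
    set u : ℝ → Fin n → ℝ := fun s => Real.exp (α₀ * s) • (z s - zstar) with hudef
    set M : ℝ → ℝ := fun s => ‖u s‖ with hMdef
    have hMeq : ∀ s, M s = Real.exp (α₀*s) * ‖z s - zstar‖ := by
      intro s
      rw [hMdef]
      simp only [hudef, norm_smul, Real.norm_eq_abs, abs_of_pos (Real.exp_pos _)]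
    have hui : ∀ s i, u s i = Real.exp (α₀*s) * (z s i - zstar i) := by
      intro s i; simp [hudef]
    have hMcont : Continuous M := by
      apply Continuous.norm
      exact (Real.continuous_exp.comp (continuous_const.mul continuous_id)).smul
        (continuous_pi fun j => ((hdiff j).continuous.sub continuous_const))
    have hM : ∀ t, 0 ≤ t → M t ≤ M 0 := by
      intro T hT
      have hEps : ∀ ε, 0 < ε → M T ≤ M 0 + ε * (1 + T) := by
        intro ε hε
        by_contra hcon
        push_neg at hcon
        set S : Set ℝ := Set.Icc 0 T ∩ {t | M 0 + ε * (1 + t) ≤ M t} with hSdef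
        have hTS : T ∈ S := ⟨⟨hT, le_rfl⟩, hcon.le⟩
        have hSclosed : IsClosed S := isClosed_Icc.inter
          (isClosed_le (continuous_const.add (continuous_const.mul
            (continuous_const.add continuous_id))) hMcont)
        have hbdd : BddBelow S := ⟨0, fun t ht => ht.1.1⟩
        set t₀ : ℝ := sInf S with ht₀def
        have ht₀S : t₀ ∈ S := hSclosed.csInf_mem ⟨T, hTS⟩ hbdd
        obtain ⟨⟨ht₀0, ht₀T⟩, ht₀M⟩ := ht₀S
        have ht₀M' : M 0 + ε * (1 + t₀) ≤ M t₀ := ht₀M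
        have ht₀pos : 0 < t₀ := by
          rcases ht₀0.lt_or_eq with h | h
          · exact h
          · exfalso
            rw [← h] at ht₀M'
            nlinarith
        have hlow : ∀ s, 0 ≤ s → s < t₀ → M s < M 0 + ε * (1 + s) := by
          intro s hs0 hst
          by_contra hc
          push_neg at hc
          have : s ∈ S := ⟨⟨hs0, hst.le.trans ht₀T⟩, hc⟩
          exact absurd (csInf_le hbdd this) (not_le.mpr hst)
        obtain ⟨i, -, hi⟩ := Finset.exists_max_image univ (fun k => |u t₀ k|)
          ⟨⟨0, hn⟩, Finset.mem_univ _⟩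
        have hMt₀ : M t₀ = |u t₀ i| := by
          apply le_antisymm
          · exact (pi_norm_le_iff_of_nonneg (abs_nonneg _)).mpr
              (fun k => by simpa [Real.norm_eq_abs] using hi k (Finset.mem_univ k))
          · simpa [Real.norm_eq_abs] using norm_le_pi_norm (u t₀) i
        have hMpos : 0 < M t₀ := lt_of_lt_of_le (by nlinarith [norm_nonneg (u 0)]) ht₀M
        have hE : 0 < Real.exp (α₀ * t₀) := Real.exp_pos _
        -- sign
        have hune : u t₀ i ≠ 0 := fun hc => by rw [hMt₀, hc] at hMpos; simp at hMpos
        obtain ⟨sg, hsg1, hsgcases⟩ : ∃ sg : ℝ, sg * u t₀ i = |u t₀ i| ∧ (sg = 1 ∨ sg = -1) := by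
          rcases hune.lt_or_gt with h | h
          · exact ⟨-1, by rw [abs_of_neg h]; ring, Or.inr rfl⟩
          · exact ⟨1, by rw [abs_of_pos h]; ring, Or.inl rfl⟩
        set φ : ℝ → ℝ := fun s => sg * (Real.exp (α₀*s) * (z s i - zstar i)) with hφdef
        have hφt₀ : φ t₀ = M t₀ := by rw [hMt₀, ← hsg1, hφdef]; simp [hui]
        have hφle : ∀ s, φ s ≤ M s := by
          intro s
          have h1 : φ s ≤ |φ s| := le_abs_self _
          have h2 : |φ s| = |u s i| := by
            rw [hφdef]
            simp only [abs_mul, ← hui]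
            rcases hsgcases with h | h <;> simp [h, abs_mul]
          have h3 : |u s i| ≤ M s := by
            simpa [Real.norm_eq_abs] using norm_le_pi_norm (u s) i
          linarith
        -- derivative of φ at t₀
        have he : HasDerivAt (fun s => Real.exp (α₀*s)) (Real.exp (α₀*t₀) * α₀) t₀ := by
          have h1 : HasDerivAt (fun s : ℝ => α₀ * s) α₀ t₀ := by
            simpa using (hasDerivAt_id t₀).const_mul α₀
          exact (Real.hasDerivAt_exp (α₀*t₀)).comp t₀ h1
        have hg : HasDerivAt (fun s => z s i - zstar i) (f (z t₀) i) t₀ :=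
          (hderiv t₀ ht₀0 i).sub_const (zstar i)
        have hd : HasDerivAt φ
            (sg * (Real.exp (α₀*t₀) * α₀ * (z t₀ i - zstar i)
              + Real.exp (α₀*t₀) * f (z t₀) i)) t₀ := by
          have := (he.mul hg).const_mul sg
          exact this
        -- the derivative is ≤ 0
        have hmax : ∀ k, |z t₀ k - zstar k| ≤ |z t₀ i - zstar i| := by
          intro k
          have := hi k (Finset.mem_univ k)
          rw [hui, hui, abs_mul, abs_mul, abs_of_pos hE] at this
          exact le_of_mul_le_mul_left this hE
        have hkeyi := hkey (z t₀) zstar i hmax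
        have hfz : f zstar i = 0 := by rw [hzstar]; rfl
        rw [hfz, sub_zero] at hkeyi
        have hsgf : sg * f (z t₀) i ≤ -α₀ * |z t₀ i - zstar i| := by
          have hdine : z t₀ i - zstar i ≠ 0 := by
            intro hc
            apply hune
            rw [hui, hc, mul_zero]
          rcases hdine.lt_or_gt with h | h
          · have hsgval : sg = -1 := by
              rcases hsgcases with h1 | h1
              · exfalso
                rw [h1, one_mul] at hsg1
                have : u t₀ i < 0 := by rw [hui]; exact mul_neg_of_pos_of_neg hE h
                rw [abs_of_neg this] at hsg1
                linarith
              · exact h1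
            rw [hsgval, abs_of_neg h]
            nlinarith
          · have hsgval : sg = 1 := by
              rcases hsgcases with h1 | h1
              · exact h1
              · exfalso
                rw [h1] at hsg1
                have : 0 < u t₀ i := by rw [hui]; exact mul_pos hE h
                rw [abs_of_pos this] at hsg1
                linarith
            rw [hsgval, abs_of_pos h]
            nlinarith
        have hderle : sg * (Real.exp (α₀*t₀) * α₀ * (z t₀ i - zstar i)
              + Real.exp (α₀*t₀) * f (z t₀) i) ≤ 0 := by
          have h1 : sg * (Real.exp (α₀*t₀) * (z t₀ i - zstar i)) = M t₀ := by
            rw [hMt₀, ← hsg1, hui]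
          have h2 : Real.exp (α₀*t₀) * (sg * f (z t₀) i)
              ≤ Real.exp (α₀*t₀) * (-α₀ * |z t₀ i - zstar i|) :=
            mul_le_mul_of_nonneg_left hsgf hE.le
          have h3 : Real.exp (α₀*t₀) * |z t₀ i - zstar i| = M t₀ := by
            rw [hMt₀, hui, abs_mul, abs_of_pos hE]
          have h4 : sg * (Real.exp (α₀*t₀) * α₀ * (z t₀ i - zstar i)
              + Real.exp (α₀*t₀) * f (z t₀) i)
              = α₀ * (sg * (Real.exp (α₀*t₀) * (z t₀ i - zstar i)))
                + Real.exp (α₀*t₀) * (sg * f (z t₀) i) := by ring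
          have h5 : Real.exp (α₀*t₀) * (-α₀ * |z t₀ i - zstar i|) = -α₀ * M t₀ := by
            rw [← h3]; ring
          have h4' : sg * (Real.exp (α₀*t₀) * α₀ * (z t₀ i - zstar i)
              + Real.exp (α₀*t₀) * f (z t₀) i)
              = α₀ * M t₀ + Real.exp (α₀*t₀) * (sg * f (z t₀) i) := by
            rw [← h1]; ring
          linarith [h2, h4', h5]
        -- slope from the left is ≥ ε
        have htend : Filter.Tendsto (slope φ t₀) (nhdsWithin t₀ (Set.Iio t₀))
            (nhds (sg * (Real.exp (α₀*t₀) * α₀ * (z t₀ i - zstar i)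
              + Real.exp (α₀*t₀) * f (z t₀) i))) := by
          apply (hasDerivAt_iff_tendsto_slope.mp hd).mono_left
          apply nhdsWithin_mono
          intro x hx
          exact ne_of_lt hx
        have hev : ∀ᶠ s in nhdsWithin t₀ (Set.Iio t₀), ε ≤ slope φ t₀ s := by
          have h1 : ∀ᶠ s in nhdsWithin t₀ (Set.Iio t₀), 0 < s :=
            (eventually_gt_nhds ht₀pos).filter_mono nhdsWithin_le_nhds
          filter_upwards [h1, self_mem_nhdsWithin] with s hs1 hs2
          have hst : s < t₀ := hs2
          have hMs := hlow s hs1.le hst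
          have hφs := hφle s
          rw [slope_def_field]
          have hneg : s - t₀ < 0 := by linarith
          rw [le_div_iff_of_neg hneg]
          linarith [hφt₀ ▸ ht₀M']
        have : ε ≤ sg * (Real.exp (α₀*t₀) * α₀ * (z t₀ i - zstar i)
              + Real.exp (α₀*t₀) * f (z t₀) i) := ge_of_tendsto htend hev
        linarith
      apply le_of_forall_pos_le_add
      intro δ hδ
      have := hEps (δ / (1 + T)) (by positivity)
      calc M T ≤ M 0 + δ / (1 + T) * (1 + T) := this
        _ = M 0 + δ := by field_simp
    intro t ht
    have hMt := hM t ht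
    rw [hMeq, hMeq] at hMt
    simp only [mul_zero, Real.exp_zero, one_mul] at hMt
    calc ‖z t - zstar‖ = Real.exp (-α₀*t) * (Real.exp (α₀*t) * ‖z t - zstar‖) := by
          rw [← mul_assoc, ← Real.exp_add, neg_mul, neg_add_cancel, Real.exp_zero, one_mul]
      _ ≤ Real.exp (-α₀*t) * ‖z 0 - zstar‖ :=
          mul_le_mul_of_nonneg_left hMt (Real.exp_pos _).le
end

section
/- (Positive invariance of the consensus box without antagonism) Suppose a_{ik} ≥ 0 for all i,k (no antagonistic relations). Let m_min := min_i m_i and m_max := max_i m_i, and let M := [m_min, m_max]. Then the box Mⁿ is positively invariant: for every solution z of the opinion dynamics with z(0) ∈ Mⁿ, one has z(t) ∈ Mⁿ for all t ≥ 0. -/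
open Finset Filter Topology

private lemma slope_branch_aux {x r gx : ℝ} {u : ℝ → ℝ} (hu : Continuous u) (hr : 0 < r)
    (hle : u x ≤ gx)
    (hd : u x = gx → ∃ d, d ≤ 0 ∧ HasDerivAt u d x) :
    ∀ᶠ s in 𝓝[>] x, u s < r * (s - x) + gx := by
  rcases lt_or_eq_of_le hle with hlt | heq
  · have h1 : ∀ᶠ s in 𝓝[>] x, u s < gx :=
      eventually_nhdsWithin_of_eventually_nhds ((hu.tendsto x).eventually_lt_const hlt)
    filter_upwards [h1, self_mem_nhdsWithin] with s hs (hmem : s ∈ Set.Ioi x)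
    have h2 : 0 ≤ r * (s - x) := by
      have := le_of_lt (Set.mem_Ioi.1 hmem); nlinarith
    linarith
  · obtain ⟨d, hd0, hder⟩ := hd heq
    have hslope : Tendsto (slope u x) (𝓝[>] x) (𝓝 d) :=
      ((hasDerivAt_iff_tendsto_slope.1 hder).mono_left
        (nhdsWithin_mono x (by intro s hs; exact ne_of_gt hs)))
    have h2 : ∀ᶠ s in 𝓝[>] x, slope u x s < r :=
      hslope.eventually_lt_const (lt_of_le_of_lt hd0 hr)
    filter_upwards [h2, self_mem_nhdsWithin] with s hs (hmem : s ∈ Set.Ioi x)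
    have hsx : 0 < s - x := sub_pos.2 (Set.mem_Ioi.1 hmem)
    rw [slope_def_field, div_lt_iff₀ hsx] at hs
    linarith [hs]

private lemma self_nonpos (w rj B pj mj u : ℝ) (hw : 0 < w) (hrj : 0 < rj) (hB : 0 < B)
    (hm : -(w*rj/B)*(mj - pj) - mj^3/rj = 0) (hu : mj ≤ u) :
    -(w*rj/B)*(u - pj) - u^3/rj ≤ 0 := by
  have hc : 0 < w*rj/B := by positivity
  have hcube : mj^3 ≤ u^3 := by
    nlinarith [sq_nonneg (u+mj), sq_nonneg (u-mj), sq_nonneg u, sq_nonneg mj]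
  have h2 : mj^3/rj ≤ u^3/rj := by gcongr
  nlinarith [mul_le_mul_of_nonneg_left (sub_nonneg.2 hu) (le_of_lt hc)]

private lemma self_nonneg (w rj B pj mj u : ℝ) (hw : 0 < w) (hrj : 0 < rj) (hB : 0 < B)
    (hm : -(w*rj/B)*(mj - pj) - mj^3/rj = 0) (hu : u ≤ mj) :
    0 ≤ -(w*rj/B)*(u - pj) - u^3/rj := by
  have hc : 0 < w*rj/B := by positivity
  have hcube : u^3 ≤ mj^3 := by
    nlinarith [sq_nonneg (u+mj), sq_nonneg (u-mj), sq_nonneg u, sq_nonneg mj]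
  have h2 : u^3/rj ≤ mj^3/rj := by gcongr
  nlinarith [mul_le_mul_of_nonneg_left (sub_nonneg.2 hu) (le_of_lt hc)]

/-- Positive invariance of the consensus box `[m_min, m_max]ⁿ` in the absence of
antagonistic relations. -/
theorem consensus_box_positively_invariant
    (n : ℕ) (hn : 0 < n) (p w r : Fin n → ℝ) (a : Fin n → Fin n → ℝ)
    (hw : ∀ i, 0 < w i) (hr : ∀ i, 0 < r i)
    (B : ℝ) (hB : B = ∑ k, r k)
    (hpos : ∀ i k, 0 ≤ a i k)
    (f : (Fin n → ℝ) → Fin n → ℝ)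
    (hf : ∀ z i, f z i =
      -(w i * r i / B) * (z i - p i) + (∑ k, (a i k * r k / B) * (z k - z i))
        - (z i) ^ 3 / r i)
    (m : Fin n → ℝ)
    (hm : ∀ i, -(w i * r i / B) * (m i - p i) - (m i) ^ 3 / r i = 0)
    (z : ℝ → Fin n → ℝ)
    (hdiff : ∀ j, Differentiable ℝ (fun t => z t j))
    (hsol : ∀ t : ℝ, 0 ≤ t → ∀ j, HasDerivAt (fun s => z s j) (f (z t) j) t)
    (hinit : ∀ i, (⨅ j, m j) ≤ z 0 i ∧ z 0 i ≤ ⨆ j, m j) :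
    ∀ t : ℝ, 0 ≤ t → ∀ i, (⨅ j, m j) ≤ z t i ∧ z t i ≤ ⨆ j, m j := by
  haveI : Nonempty (Fin n) := ⟨⟨0, hn⟩⟩
  have hne : (Finset.univ : Finset (Fin n)).Nonempty := univ_nonempty
  set mm := ⨅ j, m j with hmm
  set mM := ⨆ j, m j with hmM
  have hmmle : ∀ i, mm ≤ m i := fun i => ciInf_le (Set.Finite.bddBelow (Set.finite_range m)) i
  have hlemM : ∀ i, m i ≤ mM := fun i => le_ciSup (Set.Finite.bddAbove (Set.finite_range m)) i
  have hmmM : mm ≤ mM := le_trans (hmmle ⟨0, hn⟩) (hlemM ⟨0, hn⟩)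
  have hBpos : 0 < B := by rw [hB]; exact Finset.sum_pos (fun k _ => hr k) hne
  set φ : Fin n → ℝ → ℝ := fun j t => max (z t j - mM) (max (mm - z t j) 0) with hφ
  set g : ℝ → ℝ := fun t => Finset.univ.sup' hne (fun j => φ j t) with hgdef
  have hφcont : ∀ j, Continuous (φ j) := fun j =>
    (((hdiff j).continuous.sub continuous_const).max
      ((continuous_const.sub (hdiff j).continuous).max continuous_const))
  have hgcont : Continuous g :=
    Continuous.finset_sup'_apply hne (fun j _ => hφcont j)
  have hφnn : ∀ j t, 0 ≤ φ j t := fun j t =>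
    le_trans (le_max_right _ _) (le_max_right _ _)
  have hg0 : ∀ t, 0 ≤ g t := fun t =>
    le_trans (hφnn ⟨0, hn⟩ t) (Finset.le_sup' (fun j => φ j t) (Finset.mem_univ _))
  have hgA : ∀ t j, z t j - mM ≤ g t := fun t j =>
    le_trans (le_max_left _ _) (Finset.le_sup' (fun j => φ j t) (Finset.mem_univ j))
  have hgB : ∀ t j, mm - z t j ≤ g t := fun t j =>
    le_trans (le_trans (le_max_left _ _) (le_max_right _ _))
      (Finset.le_sup' (fun j => φ j t) (Finset.mem_univ j))
  -- derivative sign at active upper boundary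
  have keyA : ∀ x, 0 ≤ x → ∀ j, z x j - mM = g x → f (z x) j ≤ 0 := by
    intro x hx0 j hact
    rw [hf]
    have h1 : ∑ k, (a j k * r k / B) * (z x k - z x j) ≤ 0 := by
      refine Finset.sum_nonpos fun k _ => mul_nonpos_of_nonneg_of_nonpos
        (div_nonneg (mul_nonneg (hpos j k) (hr k).le) hBpos.le) ?_
      have := hgA x k; linarith
    have hzj : m j ≤ z x j := by
      have := hg0 x; have := hlemM j; linarith
    have h2 : -(w j * r j / B) * (z x j - p j) - (z x j)^3 / r j ≤ 0 :=
      self_nonpos (w j) (r j) B (p j) (m j) (z x j) (hw j) (hr j) hBpos (hm j) hzj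
    linarith
  -- derivative sign at active lower boundary
  have keyB : ∀ x, 0 ≤ x → ∀ j, mm - z x j = g x → 0 ≤ f (z x) j := by
    intro x hx0 j hact
    rw [hf]
    have h1 : 0 ≤ ∑ k, (a j k * r k / B) * (z x k - z x j) := by
      refine Finset.sum_nonneg fun k _ => mul_nonneg
        (div_nonneg (mul_nonneg (hpos j k) (hr k).le) hBpos.le) ?_
      have := hgB x k; linarith
    have hzj : z x j ≤ m j := by
      have := hg0 x; have := hmmle j; linarith
    have h2 : 0 ≤ -(w j * r j / B) * (z x j - p j) - (z x j)^3 / r j :=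
      self_nonneg (w j) (r j) B (p j) (m j) (z x j) (hw j) (hr j) hBpos (hm j) hzj
    linarith
  -- Gronwall: g ≤ 0 on [0, ∞)
  have main : ∀ t, 0 ≤ t → g t ≤ 0 := by
    intro t ht
    have H := le_gronwallBound_of_liminf_deriv_right_le (f := g) (f' := fun _ => (0:ℝ))
      (δ := 0) (K := 0) (ε := 0) (a := 0) (b := t) hgcont.continuousOn
      ?_ ?_ ?_ t (Set.right_mem_Icc.2 ht)
    · rwa [gronwallBound_ε0_δ0] at H
    · -- liminf slope condition
      intro x hx ρ hρ
      have hx0 : 0 ≤ x := hx.1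
      refine Filter.Eventually.frequently ?_
      have hall : ∀ᶠ s in 𝓝[>] x, ∀ j,
          z s j - mM < ρ * (s - x) + g x ∧ mm - z s j < ρ * (s - x) + g x := by
        refine Filter.eventually_all.2 fun j => Filter.Eventually.and ?_ ?_
        · exact slope_branch_aux ((hdiff j).continuous.sub continuous_const) hρ (hgA x j)
            (fun heq => ⟨f (z x) j, keyA x hx0 j heq, (hsol x hx0 j).sub_const mM⟩)
        · exact slope_branch_aux (continuous_const.sub (hdiff j).continuous) hρ (hgB x j)
            (fun heq => ⟨-(f (z x) j), by have := keyB x hx0 j heq; linarith,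
              (hsol x hx0 j).const_sub mm⟩)
      filter_upwards [hall, self_mem_nhdsWithin] with s hs (hmem : s ∈ Set.Ioi x)
      have hsx : 0 < s - x := sub_pos.2 (Set.mem_Ioi.1 hmem)
      have hgs : g s < ρ * (s - x) + g x := by
        refine (Finset.sup'_lt_iff hne).2 fun j _ => ?_
        refine max_lt (hs j).1 (max_lt (hs j).2 ?_)
        have hρ0 : (0:ℝ) < ρ := hρ
        have := hg0 x
        nlinarith [mul_pos hρ0 hsx]
      have hlt : g s - g x < ρ * (s - x) := by linarith
      calc (s - x)⁻¹ * (g s - g x) < (s - x)⁻¹ * (ρ * (s - x)) :=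
            mul_lt_mul_of_pos_left hlt (inv_pos.2 hsx)
        _ = ρ := by field_simp
    · -- g 0 ≤ 0
      refine Finset.sup'_le hne _ fun j _ => ?_
      have h := hinit j
      exact max_le (by linarith [h.2]) (max_le (by linarith [h.1]) le_rfl)
    · intro x hx
      simp [hg0 x]
  intro t ht i
  have h := main t ht
  constructor
  · have := hgB t i; linarith
  · have := hgA t i; linarith
end

section
/- (Equilibria lie in the consensus box without antagonism) Suppose a_{ik} ≥ 0 for all i,k (no antagonistic relations). Let m_min := min_i m_i and m_max := max_i m_i. Then every equilibrium point z* ∈ ℝⁿ of the opinion dynamics (f(z*) = 0) satisfies m_min ≤ z*_i ≤ m_max for all i ∈ {1,…,n}. -/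
open Finset

lemma self_le_root (c r p x m : ℝ) (hc : 0 < c) (hr : 0 < r)
    (hx : 0 ≤ -c * (x - p) - x ^ 3 / r)
    (hm : -c * (m - p) - m ^ 3 / r = 0) : x ≤ m := by
  by_contra h
  push_neg at h
  have hx' : 0 ≤ (-c * (x - p) - x ^ 3 / r) * r := mul_nonneg hx hr.le
  have hm' : (-c * (m - p) - m ^ 3 / r) * r = 0 := by rw [hm]; ring
  rw [sub_mul, div_mul_cancel₀ _ hr.ne'] at hx' hm'
  nlinarith [sq_nonneg (x + m), sq_nonneg (x - m), mul_pos hc hr]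

lemma root_le_self (c r p x m : ℝ) (hc : 0 < c) (hr : 0 < r)
    (hx : -c * (x - p) - x ^ 3 / r ≤ 0)
    (hm : -c * (m - p) - m ^ 3 / r = 0) : m ≤ x := by
  by_contra h
  push_neg at h
  have hx' : (-c * (x - p) - x ^ 3 / r) * r ≤ 0 := mul_nonpos_of_nonpos_of_nonneg hx hr.le
  have hm' : (-c * (m - p) - m ^ 3 / r) * r = 0 := by rw [hm]; ring
  rw [sub_mul, div_mul_cancel₀ _ hr.ne'] at hx' hm'
  nlinarith [sq_nonneg (x + m), sq_nonneg (x - m), mul_pos hc hr]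

/-- In the absence of antagonistic relations, every equilibrium point of the opinion
dynamics lies in the consensus box `[m_min, m_max]ⁿ`. -/
theorem equilibria_in_consensus_box
    (n : ℕ) (hn : 0 < n) (p w r : Fin n → ℝ) (a : Fin n → Fin n → ℝ)
    (hw : ∀ i, 0 < w i) (hr : ∀ i, 0 < r i)
    (B : ℝ) (hB : B = ∑ k, r k)
    (hpos : ∀ i k, 0 ≤ a i k)
    (f : (Fin n → ℝ) → Fin n → ℝ)
    (hf : ∀ z i, f z i =
      -(w i * r i / B) * (z i - p i) + (∑ k, (a i k * r k / B) * (z k - z i))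
        - (z i) ^ 3 / r i)
    (m : Fin n → ℝ)
    (hm : ∀ i, -(w i * r i / B) * (m i - p i) - (m i) ^ 3 / r i = 0)
    (zstar : Fin n → ℝ) (heq : f zstar = 0) :
    ∀ i, (⨅ j, m j) ≤ zstar i ∧ zstar i ≤ ⨆ j, m j := by
  haveI : Nonempty (Fin n) := ⟨⟨0, hn⟩⟩
  have hBpos : 0 < B := by
    rw [hB]; exact Finset.sum_pos (fun k _ => hr k) univ_nonempty
  have hzero : ∀ i, f zstar i = 0 := fun i => congrFun heq i
  -- upper bound
  obtain ⟨iM, -, hiM⟩ := Finset.exists_max_image univ zstar univ_nonempty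
  obtain ⟨im, -, him⟩ := Finset.exists_min_image univ zstar univ_nonempty
  have hcpos : ∀ i, 0 < w i * r i / B := fun i =>
    div_pos (mul_pos (hw i) (hr i)) hBpos
  have hup : zstar iM ≤ m iM := by
    have h0 := hzero iM
    rw [hf] at h0
    have hsum : (∑ k, (a iM k * r k / B) * (zstar k - zstar iM)) ≤ 0 := by
      apply Finset.sum_nonpos
      intro k _
      apply mul_nonpos_of_nonneg_of_nonpos
      · exact div_nonneg (mul_nonneg (hpos _ _) (hr k).le) hBpos.le
      · linarith [hiM k (mem_univ k)]
    exact self_le_root _ _ _ _ _ (hcpos iM) (hr iM) (by linarith) (hm iM)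
  have hlo : m im ≤ zstar im := by
    have h0 := hzero im
    rw [hf] at h0
    have hsum : 0 ≤ (∑ k, (a im k * r k / B) * (zstar k - zstar im)) := by
      apply Finset.sum_nonneg
      intro k _
      apply mul_nonneg
      · exact div_nonneg (mul_nonneg (hpos _ _) (hr k).le) hBpos.le
      · linarith [him k (mem_univ k)]
    exact root_le_self _ _ _ _ _ (hcpos im) (hr im) (by linarith) (hm im)
  intro i
  constructor
  · calc (⨅ j, m j) ≤ m im := ciInf_le (Finite.bddBelow_range m) im
    _ ≤ zstar im := hlo
    _ ≤ zstar i := him i (mem_univ i)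
  · calc zstar i ≤ zstar iM := hiM i (mem_univ i)
    _ ≤ m iM := hup
    _ ≤ ⨆ j, m j := le_ciSup (Finite.bddAbove_range m) iM
end

section
/- (Interior equilibrium characterization via directed walks) Suppose a_{ik} ≥ 0 for all i,k (no antagonistic relations) and m_min < m_max, where m_min := min_i m_i and m_max := max_i m_i. Let z* be an equilibrium point of the opinion dynamics (f(z*) = 0). Define the influence relation R on agents by R(u,v) iff a_{vu} ≠ 0 (an arc from u to v), and let V_max := {i : m_i = m_max}, V_min := {i : m_i = m_min}. Then m_min < z*_i < m_max for all i (z* lies in the open box) if and only if: for every i ∈ V_max there exists j ∉ V_max with a directed walk from j to i (i.e. the transitive closure of R relates j to i), and for every i ∈ V_min there exists j ∉ V_min with a directed walk from j to i. -/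
open Finset

lemma cube_lt_cube' {x y : ℝ} (h : x < y) : x^3 < y^3 :=
  Odd.strictMono_pow (R := ℝ) ⟨1, by norm_num⟩ h

lemma S_le_root' {c r p mi x : ℝ} (hc : 0 < c) (hr : 0 < r)
    (hroot : -c * (mi - p) - mi^3 / r = 0) (hS : 0 ≤ -c * (x - p) - x^3 / r) : x ≤ mi := by
  by_contra h
  push_neg at h
  have h3 : mi^3 < x^3 := cube_lt_cube' h
  have h4 : 0 < (x^3 - mi^3)/r := div_pos (by linarith) hr
  rw [sub_div] at h4
  have h5 : 0 < c*(x - mi) := mul_pos hc (by linarith)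
  nlinarith

lemma root_le_S' {c r p mi x : ℝ} (hc : 0 < c) (hr : 0 < r)
    (hroot : -c * (mi - p) - mi^3 / r = 0) (hS : -c * (x - p) - x^3 / r ≤ 0) : mi ≤ x := by
  by_contra h
  push_neg at h
  have h3 : x^3 < mi^3 := cube_lt_cube' h
  have h4 : 0 < (mi^3 - x^3)/r := div_pos (by linarith) hr
  rw [sub_div] at h4
  have h5 : 0 < c*(mi - x) := mul_pos hc (by linarith)
  nlinarith


/-- Interior equilibrium characterization via directed walks: without antagonistic
relations and with `m_min < m_max`, an equilibrium lies in the open consensus box iff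
every agent in `V_max` (resp. `V_min`) is reachable by a directed walk in the
influence graph from some agent outside `V_max` (resp. `V_min`). The influence
relation `R u v` holds iff `a v u ≠ 0` (an arc from `u` to `v`); directed walks
correspond to the transitive closure of `R`. -/
theorem interior_equilibrium_iff_directed_walks
    (n : ℕ) (hn : 0 < n) (p w r : Fin n → ℝ) (a : Fin n → Fin n → ℝ)
    (hw : ∀ i, 0 < w i) (hr : ∀ i, 0 < r i)
    (B : ℝ) (hB : B = ∑ k, r k)
    (hpos : ∀ i k, 0 ≤ a i k)
    (f : (Fin n → ℝ) → Fin n → ℝ)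
    (hf : ∀ z i, f z i =
      -(w i * r i / B) * (z i - p i) + (∑ k, (a i k * r k / B) * (z k - z i))
        - (z i) ^ 3 / r i)
    (m : Fin n → ℝ)
    (hm : ∀ i, -(w i * r i / B) * (m i - p i) - (m i) ^ 3 / r i = 0)
    (hlt : (⨅ j, m j) < ⨆ j, m j)
    (zstar : Fin n → ℝ) (heq : f zstar = 0) :
    (∀ i, (⨅ j, m j) < zstar i ∧ zstar i < ⨆ j, m j) ↔
      ((∀ i, m i = (⨆ j, m j) →
          ∃ j, m j ≠ (⨆ j', m j') ∧
            Relation.TransGen (fun u v => a v u ≠ 0) j i) ∧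
       (∀ i, m i = (⨅ j, m j) →
          ∃ j, m j ≠ (⨅ j', m j') ∧
            Relation.TransGen (fun u v => a v u ≠ 0) j i)) := by
  classical
  have hne : Nonempty (Fin n) := ⟨⟨0, hn⟩⟩
  have hBpos : 0 < B := by
    rw [hB]
    exact Finset.sum_pos (fun k _ => hr k) Finset.univ_nonempty
  have hcpos : ∀ i, 0 < w i * r i / B := fun i => div_pos (mul_pos (hw i) (hr i)) hBpos
  have hMle : ∀ k, m k ≤ ⨆ j, m j := fun k => le_ciSup (Set.finite_range m).bddAbove k
  have hLle : ∀ k, (⨅ j, m j) ≤ m k := fun k => ciInf_le (Set.finite_range m).bddBelow k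
  have hkey : ∀ i, -(w i * r i / B) * (zstar i - p i) - (zstar i)^3 / r i
      = - ∑ k, (a i k * r k / B) * (zstar k - zstar i) := by
    intro i
    have h0 : f zstar i = 0 := by rw [heq]; rfl
    rw [hf] at h0
    linarith
  -- If i₀ maximizes zstar over a closed set P, then zstar i₀ ≤ m i₀
  have hmax_bound : ∀ (P : Fin n → Prop), (∀ j, P j → ∀ k, a j k ≠ 0 → P k) →
      ∀ i₀, P i₀ → (∀ k, P k → zstar k ≤ zstar i₀) → zstar i₀ ≤ m i₀ := by
    intro P hcl i₀ hP hmax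
    have hsum : ∑ k, (a i₀ k * r k / B) * (zstar k - zstar i₀) ≤ 0 := by
      apply Finset.sum_nonpos
      intro k _
      by_cases hk : a i₀ k = 0
      · simp [hk]
      · have h1 : 0 ≤ a i₀ k * r k / B := div_nonneg (mul_nonneg (hpos i₀ k) (hr k).le) hBpos.le
        have h2 : zstar k - zstar i₀ ≤ 0 := by
          have := hmax k (hcl i₀ hP k hk); linarith
        exact mul_nonpos_of_nonneg_of_nonpos h1 h2
    have hS : 0 ≤ -(w i₀ * r i₀ / B) * (zstar i₀ - p i₀) - (zstar i₀)^3 / r i₀ := by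
      rw [hkey i₀]; linarith
    exact S_le_root' (hcpos i₀) (hr i₀) (hm i₀) hS
  have hmin_bound : ∀ (P : Fin n → Prop), (∀ j, P j → ∀ k, a j k ≠ 0 → P k) →
      ∀ i₀, P i₀ → (∀ k, P k → zstar i₀ ≤ zstar k) → m i₀ ≤ zstar i₀ := by
    intro P hcl i₀ hP hmin
    have hsum : 0 ≤ ∑ k, (a i₀ k * r k / B) * (zstar k - zstar i₀) := by
      apply Finset.sum_nonneg
      intro k _
      by_cases hk : a i₀ k = 0
      · simp [hk]
      · have h1 : 0 ≤ a i₀ k * r k / B := div_nonneg (mul_nonneg (hpos i₀ k) (hr k).le) hBpos.le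
        have h2 : 0 ≤ zstar k - zstar i₀ := by
          have := hmin k (hcl i₀ hP k hk); linarith
        exact mul_nonneg h1 h2
    have hS : -(w i₀ * r i₀ / B) * (zstar i₀ - p i₀) - (zstar i₀)^3 / r i₀ ≤ 0 := by
      rw [hkey i₀]; linarith
    exact root_le_S' (hcpos i₀) (hr i₀) (hm i₀) hS
  constructor
  · -- interior ⟹ reachability
    intro hint
    constructor
    · intro i hmi
      by_contra hno
      push_neg at hno
      set W : Fin n → Prop :=
        fun j => j = i ∨ Relation.TransGen (fun u v => a v u ≠ 0) j i with hWdef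
      have hWm : ∀ j, W j → m j = ⨆ j', m j' := by
        rintro j (rfl | hT)
        · exact hmi
        · by_contra hne'
          exact absurd hT (hno j hne')
      have hWcl : ∀ j, W j → ∀ k, a j k ≠ 0 → W k := by
        rintro j (rfl | hT) k hk
        · exact Or.inr (Relation.TransGen.single hk)
        · exact Or.inr (Relation.TransGen.head hk hT)
      obtain ⟨j₂, hj₂W, hj₂min⟩ := Finset.exists_min_image (Finset.univ.filter W) zstar
        ⟨i, by simp [hWdef]⟩
      have hj₂W' : W j₂ := (Finset.mem_filter.mp hj₂W).2
      have hle : m j₂ ≤ zstar j₂ :=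
        hmin_bound W hWcl j₂ hj₂W' (fun k hk => hj₂min k (by simp [hk]))
      have h2 := hWm j₂ hj₂W'
      have h1 := (hint j₂).2
      rw [h2] at hle
      linarith
    · intro i hmi
      by_contra hno
      push_neg at hno
      set W : Fin n → Prop :=
        fun j => j = i ∨ Relation.TransGen (fun u v => a v u ≠ 0) j i with hWdef
      have hWm : ∀ j, W j → m j = ⨅ j', m j' := by
        rintro j (rfl | hT)
        · exact hmi
        · by_contra hne'
          exact absurd hT (hno j hne')
      have hWcl : ∀ j, W j → ∀ k, a j k ≠ 0 → W k := by
        rintro j (rfl | hT) k hk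
        · exact Or.inr (Relation.TransGen.single hk)
        · exact Or.inr (Relation.TransGen.head hk hT)
      obtain ⟨j₂, hj₂W, hj₂max⟩ := Finset.exists_max_image (Finset.univ.filter W) zstar
        ⟨i, by simp [hWdef]⟩
      have hj₂W' : W j₂ := (Finset.mem_filter.mp hj₂W).2
      have hle : zstar j₂ ≤ m j₂ :=
        hmax_bound W hWcl j₂ hj₂W' (fun k hk => hj₂max k (by simp [hk]))
      have h2 := hWm j₂ hj₂W'
      have h1 := (hint j₂).1
      rw [h2] at hle
      linarith
  · -- reachability ⟹ interior
    rintro ⟨hrmax, hrmin⟩ i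
    have hub : ∀ k, zstar k ≤ ⨆ j, m j := by
      obtain ⟨i₀, hi₀⟩ := Finite.exists_max zstar
      have h1 : zstar i₀ ≤ m i₀ :=
        hmax_bound (fun _ => True) (fun _ _ _ _ => trivial) i₀ trivial (fun k _ => hi₀ k)
      exact fun k => le_trans (hi₀ k) (le_trans h1 (hMle i₀))
    have hlb : ∀ k, (⨅ j, m j) ≤ zstar k := by
      obtain ⟨i₀, hi₀⟩ := Finite.exists_min zstar
      have h1 : m i₀ ≤ zstar i₀ :=
        hmin_bound (fun _ => True) (fun _ _ _ _ => trivial) i₀ trivial (fun k _ => hi₀ k)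
      exact fun k => le_trans (le_trans (hLle i₀) h1) (hi₀ k)
    -- analysis of the set of agents at the top value
    have hZ : ∀ v, zstar v = ⨆ j, m j →
        (m v = ⨆ j, m j) ∧ ∀ u, a v u ≠ 0 → zstar u = ⨆ j, m j := by
      intro v hv
      have hterm : ∀ k ∈ Finset.univ, (a v k * r k / B) * (zstar k - zstar v) ≤ 0 := by
        intro k _
        have h1 : 0 ≤ a v k * r k / B := div_nonneg (mul_nonneg (hpos v k) (hr k).le) hBpos.le
        have h2 : zstar k - zstar v ≤ 0 := by
          have := hub k; rw [hv]; linarith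
        exact mul_nonpos_of_nonneg_of_nonpos h1 h2
      have hsum : ∑ k, (a v k * r k / B) * (zstar k - zstar v) ≤ 0 :=
        Finset.sum_nonpos (fun k hk => hterm k hk)
      have hSge : 0 ≤ -(w v * r v / B) * (zstar v - p v) - (zstar v)^3 / r v := by
        rw [hkey v]; linarith
      have hle : zstar v ≤ m v := S_le_root' (hcpos v) (hr v) (hm v) hSge
      have hmv : m v = ⨆ j, m j := le_antisymm (hMle v) (by rw [← hv]; exact hle)
      have hzm : zstar v = m v := by rw [hv, hmv]
      have hS0 : -(w v * r v / B) * (zstar v - p v) - (zstar v)^3 / r v = 0 := by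
        rw [hzm]; exact hm v
      have hsum0 : ∑ k, (a v k * r k / B) * (zstar k - zstar v) = 0 := by
        have := hkey v; rw [hS0] at this; linarith
      refine ⟨hmv, fun u hu => ?_⟩
      have h0 := (Finset.sum_eq_zero_iff_of_nonpos hterm).mp hsum0 u (Finset.mem_univ u)
      have hcoef : 0 < a v u * r u / B :=
        div_pos (mul_pos (lt_of_le_of_ne (hpos v u) (Ne.symm hu)) (hr u)) hBpos
      rcases mul_eq_zero.mp h0 with h | h
      · exact absurd h (ne_of_gt hcoef)
      · have : zstar u = zstar v := by linarith
        rw [this, hv]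
    have hZ' : ∀ v, zstar v = ⨅ j, m j →
        (m v = ⨅ j, m j) ∧ ∀ u, a v u ≠ 0 → zstar u = ⨅ j, m j := by
      intro v hv
      have hterm : ∀ k ∈ Finset.univ, 0 ≤ (a v k * r k / B) * (zstar k - zstar v) := by
        intro k _
        have h1 : 0 ≤ a v k * r k / B := div_nonneg (mul_nonneg (hpos v k) (hr k).le) hBpos.le
        have h2 : 0 ≤ zstar k - zstar v := by
          have := hlb k; rw [hv]; linarith
        exact mul_nonneg h1 h2
      have hsum : 0 ≤ ∑ k, (a v k * r k / B) * (zstar k - zstar v) :=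
        Finset.sum_nonneg (fun k hk => hterm k hk)
      have hSle : -(w v * r v / B) * (zstar v - p v) - (zstar v)^3 / r v ≤ 0 := by
        rw [hkey v]; linarith
      have hle : m v ≤ zstar v := root_le_S' (hcpos v) (hr v) (hm v) hSle
      have hmv : m v = ⨅ j, m j := le_antisymm (by rw [← hv]; exact hle) (hLle v)
      have hzm : zstar v = m v := by rw [hv, hmv]
      have hS0 : -(w v * r v / B) * (zstar v - p v) - (zstar v)^3 / r v = 0 := by
        rw [hzm]; exact hm v
      have hsum0 : ∑ k, (a v k * r k / B) * (zstar k - zstar v) = 0 := by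
        have := hkey v; rw [hS0] at this; linarith
      refine ⟨hmv, fun u hu => ?_⟩
      have h0 := (Finset.sum_eq_zero_iff_of_nonneg hterm).mp hsum0 u (Finset.mem_univ u)
      have hcoef : 0 < a v u * r u / B :=
        div_pos (mul_pos (lt_of_le_of_ne (hpos v u) (Ne.symm hu)) (hr u)) hBpos
      rcases mul_eq_zero.mp h0 with h | h
      · exact absurd h (ne_of_gt hcoef)
      · have : zstar u = zstar v := by linarith
        rw [this, hv]
    have hne_top : zstar i ≠ ⨆ j, m j := by
      intro hv
      obtain ⟨hmv, _⟩ := hZ i hv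
      obtain ⟨j, hjne, hjT⟩ := hrmax i hmv
      have hback : ∀ u v, Relation.TransGen (fun u v => a v u ≠ 0) u v →
          zstar v = ⨆ j, m j → zstar u = ⨆ j, m j := by
        intro u v h
        induction h with
        | single h => exact fun hv' => (hZ _ hv').2 _ h
        | tail _ hbc ih => exact fun hv' => ih ((hZ _ hv').2 _ hbc)
      exact hjne (hZ j (hback j i hjT hv)).1
    have hne_bot : zstar i ≠ ⨅ j, m j := by
      intro hv
      obtain ⟨hmv, _⟩ := hZ' i hv
      obtain ⟨j, hjne, hjT⟩ := hrmin i hmv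
      have hback : ∀ u v, Relation.TransGen (fun u v => a v u ≠ 0) u v →
          zstar v = ⨅ j, m j → zstar u = ⨅ j, m j := by
        intro u v h
        induction h with
        | single h => exact fun hv' => (hZ' _ hv').2 _ h
        | tail _ hbc ih => exact fun hv' => ih ((hZ' _ hv').2 _ hbc)
      exact hjne (hZ' j (hback j i hjT hv)).1
    exact ⟨lt_of_le_of_ne (hlb i) (Ne.symm hne_bot), lt_of_le_of_ne (hub i) hne_top⟩
end

section
/- (Consensus deviation from preference) Suppose p_i ≠ 0 for every i, and suppose ξ·1 is an equilibrium point of the opinion dynamics for some ξ ∈ ℝ. Define the consensus dominance weights σ_i := w_i·r_i² and deviations Δ_i := |p_i − ξ|. Then σ_i·Δ_i = σ_j·Δ_j for all i,j ∈ {1,…,n}; in particular, for all i,j: σ_i > σ_j if and only if Δ_i < Δ_j. -/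
open Finset

/-- Consensus deviation from preference: if all preferences are non-zero and `ξ·1` is
an equilibrium, then the products `σ_i Δ_i` of consensus dominance weights
`σ_i = w_i r_i²` and deviations `Δ_i = |p_i − ξ|` are the same for all agents; in
particular `σ_i > σ_j ↔ Δ_i < Δ_j`. -/
theorem consensus_dominance
    (n : ℕ) (p w r : Fin n → ℝ) (a : Fin n → Fin n → ℝ)
    (hw : ∀ i, 0 < w i) (hr : ∀ i, 0 < r i)
    (B : ℝ) (hB : B = ∑ k, r k)
    (f : (Fin n → ℝ) → Fin n → ℝ)
    (hf : ∀ z i, f z i =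
      -(w i * r i / B) * (z i - p i) + (∑ k, (a i k * r k / B) * (z k - z i))
        - (z i) ^ 3 / r i)
    (hp : ∀ i, p i ≠ 0)
    (ξ : ℝ) (heq : f (fun _ => ξ) = 0) :
    ∀ i j : Fin n,
      (w i * (r i) ^ 2) * |p i - ξ| = (w j * (r j) ^ 2) * |p j - ξ| ∧
      ((w j * (r j) ^ 2) < (w i * (r i) ^ 2) ↔ |p i - ξ| < |p j - ξ|) := by
  intro i j
  have hBpos : 0 < B := by
    rw [hB]
    exact Finset.sum_pos (fun k _ => hr k) ⟨i, Finset.mem_univ i⟩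
  -- key equation at each index
  have key : ∀ k : Fin n, w k * (r k) ^ 2 * (ξ - p k) = -(B * ξ ^ 3) := by
    intro k
    have h0 : f (fun _ => ξ) k = 0 := by rw [heq]; rfl
    rw [hf] at h0
    have hsum : (∑ m, (a k m * r m / B) * (ξ - ξ)) = 0 := by
      simp
    simp only [hsum] at h0
    have hrk := (hr k).ne'
    field_simp at h0
    nlinarith [h0, hr k, hBpos]
  have hxi : ξ ≠ 0 := by
    intro h
    have := key i
    rw [h] at this
    have hpi := hp i
    have : w i * (r i) ^ 2 * (-p i) = 0 := by simpa using this
    have hpos : 0 < w i * (r i) ^ 2 := mul_pos (hw i) (pow_pos (hr i) 2)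
    rcases mul_eq_zero.1 this with h1 | h2
    · exact hpos.ne' h1
    · exact hpi (by linarith)
  have habs : ∀ k : Fin n, w k * (r k) ^ 2 * |p k - ξ| = B * |ξ| ^ 3 := by
    intro k
    have hpos : 0 < w k * (r k) ^ 2 := mul_pos (hw k) (pow_pos (hr k) 2)
    have : w k * (r k) ^ 2 * |p k - ξ| = |w k * (r k) ^ 2 * (p k - ξ)| := by
      rw [abs_mul, abs_of_pos hpos]
    rw [this]
    have : w k * (r k) ^ 2 * (p k - ξ) = B * ξ ^ 3 := by
      have := key k; linarith
    rw [this, abs_mul, abs_of_pos hBpos, abs_pow]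
  have hC : 0 < B * |ξ| ^ 3 := mul_pos hBpos (pow_pos (abs_pos.2 hxi) 3)
  have hi := habs i
  have hj := habs j
  have hσi : 0 < w i * (r i) ^ 2 := mul_pos (hw i) (pow_pos (hr i) 2)
  have hσj : 0 < w j * (r j) ^ 2 := mul_pos (hw j) (pow_pos (hr j) 2)
  have hΔi : 0 < |p i - ξ| := by
    by_contra h
    push_neg at h
    have : |p i - ξ| = 0 := le_antisymm h (abs_nonneg _)
    rw [this, mul_zero] at hi
    linarith
  have hΔj : 0 < |p j - ξ| := by
    by_contra h
    push_neg at h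
    have : |p j - ξ| = 0 := le_antisymm h (abs_nonneg _)
    rw [this, mul_zero] at hj
    linarith
  refine ⟨hi.trans hj.symm, ?_, ?_⟩
  · intro h; nlinarith
  · intro h; nlinarith
end

section
/- (Convexity of the cost function) Suppose a_{ik} ≥ 0 for all i,k (no antagonistic relations). Then for every agent i, the cost function χ_i(z) := −U_i(z) is convex on ℝⁿ, and the consensus profile m_i·1 (every coordinate equal to m_i, the unique real root of the self function S_i) is a global minimizer of χ_i, i.e. χ_i(m_i·1) ≤ χ_i(z) for all z ∈ ℝⁿ. -/
open Finset

private lemma sq_combo (u v t s : ℝ) (ht : 0 ≤ t) (hs : 0 ≤ s) (hts : t + s = 1) :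
    (t * u + s * v) ^ 2 ≤ t * u ^ 2 + s * v ^ 2 := by
  nlinarith [mul_nonneg (mul_nonneg ht hs) (sq_nonneg (u - v))]

private lemma quart_combo (u v t s : ℝ) (ht : 0 ≤ t) (hs : 0 ≤ s) (hts : t + s = 1) :
    (t * u + s * v) ^ 4 ≤ t * u ^ 4 + s * v ^ 4 := by
  have h1 := sq_combo u v t s ht hs hts
  have h2 := sq_combo (u ^ 2) (v ^ 2) t s ht hs hts
  have h0 : (0:ℝ) ≤ (t * u + s * v) ^ 2 := sq_nonneg _
  calc (t * u + s * v) ^ 4 = ((t * u + s * v) ^ 2) ^ 2 := by ring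
    _ ≤ (t * u ^ 2 + s * v ^ 2) ^ 2 := by nlinarith
    _ ≤ t * (u ^ 2) ^ 2 + s * (v ^ 2) ^ 2 := h2
    _ = t * u ^ 4 + s * v ^ 4 := by ring

/-- Convexity of the cost function: in the absence of antagonistic relations, each
cost `χ_i = −U_i` is convex on `ℝⁿ` and the consensus profile `m_i·1` is a global
minimizer of `χ_i`. -/
theorem cost_function_convex_with_consensus_minimizer
    (n : ℕ) (p w r : Fin n → ℝ) (a : Fin n → Fin n → ℝ)
    (hw : ∀ i, 0 < w i) (hr : ∀ i, 0 < r i)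
    (B : ℝ) (hB : B = ∑ k, r k)
    (hpos : ∀ i k, 0 ≤ a i k)
    (χ : Fin n → (Fin n → ℝ) → ℝ)
    (hχ : ∀ i z, χ i z =
      -(-(w i * r i / (2 * B)) * (z i - p i) ^ 2
        - (1 / 2) * (∑ k, (a i k * r k / B) * (z k - z i) ^ 2)
        - (z i) ^ 4 / (4 * r i)))
    (m : Fin n → ℝ)
    (hm : ∀ i, -(w i * r i / B) * (m i - p i) - (m i) ^ 3 / r i = 0) :
    ∀ i, ConvexOn ℝ Set.univ (χ i) ∧
      ∀ z : Fin n → ℝ, χ i (fun _ => m i) ≤ χ i z := by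
  intro i
  have hBpos : 0 < B := by
    rw [hB]
    exact Finset.sum_pos (fun k _ => hr k) ⟨i, Finset.mem_univ i⟩
  have hB0 : B ≠ 0 := ne_of_gt hBpos
  have hri := hr i
  have hr0 : r i ≠ 0 := ne_of_gt hri
  have h4r : (0:ℝ) < 4 * r i := by linarith
  have hA : 0 ≤ w i * r i / (2 * B) :=
    div_nonneg (mul_nonneg (hw i).le (hr i).le) (by linarith)
  have hc : ∀ k, 0 ≤ a i k * r k / B :=
    fun k => div_nonneg (mul_nonneg (hpos i k) (hr k).le) hBpos.le
  constructor
  · refine ⟨convex_univ, fun x _ y _ t s ht hs hts => ?_⟩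
    simp only [hχ, Pi.add_apply, Pi.smul_apply, smul_eq_mul]
    have h1' : w i * r i / (2 * B) * (t * x i + s * y i - p i) ^ 2 ≤
        t * (w i * r i / (2 * B) * (x i - p i) ^ 2)
          + s * (w i * r i / (2 * B) * (y i - p i) ^ 2) := by
      have e : t * x i + s * y i - p i = t * (x i - p i) + s * (y i - p i) := by
        linear_combination (p i) * hts
      calc w i * r i / (2 * B) * (t * x i + s * y i - p i) ^ 2
          = w i * r i / (2 * B) * (t * (x i - p i) + s * (y i - p i)) ^ 2 := by rw [e]
        _ ≤ w i * r i / (2 * B) * (t * (x i - p i) ^ 2 + s * (y i - p i) ^ 2) :=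
            mul_le_mul_of_nonneg_left (sq_combo _ _ t s ht hs hts) hA
        _ = t * (w i * r i / (2 * B) * (x i - p i) ^ 2)
              + s * (w i * r i / (2 * B) * (y i - p i) ^ 2) := by ring
    have h2 : (∑ k, (a i k * r k / B) * (t * x k + s * y k - (t * x i + s * y i)) ^ 2) ≤
        t * (∑ k, (a i k * r k / B) * (x k - x i) ^ 2)
          + s * (∑ k, (a i k * r k / B) * (y k - y i) ^ 2) := by
      rw [Finset.mul_sum, Finset.mul_sum, ← Finset.sum_add_distrib]
      refine Finset.sum_le_sum fun k _ => ?_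
      have e : t * x k + s * y k - (t * x i + s * y i)
          = t * (x k - x i) + s * (y k - y i) := by ring
      calc (a i k * r k / B) * (t * x k + s * y k - (t * x i + s * y i)) ^ 2
          = (a i k * r k / B) * (t * (x k - x i) + s * (y k - y i)) ^ 2 := by rw [e]
        _ ≤ (a i k * r k / B) * (t * (x k - x i) ^ 2 + s * (y k - y i) ^ 2) :=
            mul_le_mul_of_nonneg_left (sq_combo _ _ t s ht hs hts) (hc k)
        _ = t * ((a i k * r k / B) * (x k - x i) ^ 2)
              + s * ((a i k * r k / B) * (y k - y i) ^ 2) := by ring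
    have h3 : (t * x i + s * y i) ^ 4 / (4 * r i) ≤
        t * ((x i) ^ 4 / (4 * r i)) + s * ((y i) ^ 4 / (4 * r i)) := by
      have hq := quart_combo (x i) (y i) t s ht hs hts
      calc (t * x i + s * y i) ^ 4 / (4 * r i)
          ≤ (t * (x i) ^ 4 + s * (y i) ^ 4) / (4 * r i) := by
            apply div_le_div_of_nonneg_right hq h4r.le
        _ = t * ((x i) ^ 4 / (4 * r i)) + s * ((y i) ^ 4 / (4 * r i)) := by ring
    linarith [h1', h2, h3]
  · intro z
    rw [hχ, hχ]
    have hS : 0 ≤ ∑ k, (a i k * r k / B) * (z k - z i) ^ 2 :=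
      Finset.sum_nonneg fun k _ => mul_nonneg (hc k) (sq_nonneg _)
    have hS0 : (∑ k, (a i k * r k / B) * ((fun _ => m i) k - (fun _ => m i) i) ^ 2) = 0 := by
      simp
    have key : 2 * (w i * r i / (2 * B)) * (m i - p i) + (m i) ^ 3 / r i = 0 := by
      have h := hm i
      have e : (2:ℝ) * (w i * r i / (2 * B)) = w i * r i / B := by
        field_simp
      rw [e]; linarith
    have hq : 4 * (m i) ^ 3 * (z i - m i) ≤ (z i) ^ 4 - (m i) ^ 4 := by
      nlinarith [mul_nonneg (sq_nonneg (z i - m i)) (sq_nonneg (z i + m i)),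
        mul_nonneg (sq_nonneg (z i - m i)) (sq_nonneg (m i))]
    have hq' : (m i) ^ 3 / r i * (z i - m i) ≤ (z i) ^ 4 / (4 * r i) - (m i) ^ 4 / (4 * r i) := by
      have e : (z i) ^ 4 / (4 * r i) - (m i) ^ 4 / (4 * r i) - (m i) ^ 3 / r i * (z i - m i)
          = ((z i) ^ 4 - (m i) ^ 4 - 4 * (m i) ^ 3 * (z i - m i)) / (4 * r i) := by
        field_simp
      have h0 : 0 ≤ ((z i) ^ 4 - (m i) ^ 4 - 4 * (m i) ^ 3 * (z i - m i)) / (4 * r i) :=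
        div_nonneg (by linarith) h4r.le
      linarith [e ▸ h0]
    have hquad : 2 * (w i * r i / (2 * B)) * (m i - p i) * (z i - m i) ≤
        w i * r i / (2 * B) * (z i - p i) ^ 2 - w i * r i / (2 * B) * (m i - p i) ^ 2 := by
      nlinarith [mul_nonneg hA (sq_nonneg (z i - m i))]
    have hzero : (2 * (w i * r i / (2 * B)) * (m i - p i) + (m i) ^ 3 / r i) * (z i - m i) = 0 := by
      rw [key, zero_mul]
    simp only [hS0]
    nlinarith [hq', hquad, hS, hzero]
end

section
/- (Bounds on prices of anarchy via satisfaction ratios) Suppose a_{ik} ≥ 0 for all i,k (no antagonistic relations) and p_i ≠ 0 for every i. Let z* be a Nash equilibrium of the opinion formation game. Then for every y ∈ ℝⁿ: (max_{i} χ_i(z*)) ≤ (max_{i} χ_i(z*)/χ_i(m_i·1)) · (max_{i} χ_i(y)), and (∑_{i} χ_i(z*)) ≤ (∑_{i} χ_i(z*)/χ_i(m_i·1)) · (∑_{i} χ_i(y)); here χ_i(m_i·1) > 0, the ratios χ_i(z*)/χ_i(m_i·1) are the satisfaction ratios SR_i(z*), and these inequalities bound the egalitarian and utilitarian prices of anarchy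 by max_i SR_i(z*) and ∑_i SR_i(z*) respectively. -/
open Finset

/-- Bounds on the egalitarian and utilitarian prices of anarchy via satisfaction
ratios: at a Nash equilibrium `z*`, the worst-case cost `max_i χ_i(z*)` and total cost
`∑_i χ_i(z*)` are bounded by `max_i SR_i(z*)` and `∑_i SR_i(z*)` times the optimal
egalitarian and utilitarian costs respectively, where `SR_i(z*) = χ_i(z*)/χ_i(m_i·1)`
and `χ_i(m_i·1) > 0`. -/
theorem price_of_anarchy_bounds
    (n : ℕ) (hn : 0 < n) (p w r : Fin n → ℝ) (a : Fin n → Fin n → ℝ)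
    (hw : ∀ i, 0 < w i) (hr : ∀ i, 0 < r i)
    (B : ℝ) (hB : B = ∑ k, r k)
    (hpos : ∀ i k, 0 ≤ a i k)
    (hp : ∀ i, p i ≠ 0)
    (U : Fin n → (Fin n → ℝ) → ℝ)
    (hU : ∀ i z, U i z =
      -(w i * r i / (2 * B)) * (z i - p i) ^ 2
        - (1 / 2) * (∑ k, (a i k * r k / B) * (z k - z i) ^ 2)
        - (z i) ^ 4 / (4 * r i))
    (χ : Fin n → (Fin n → ℝ) → ℝ) (hχ : ∀ i z, χ i z = -U i z)
    (m : Fin n → ℝ)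
    (hm : ∀ i, -(w i * r i / B) * (m i - p i) - (m i) ^ 3 / r i = 0)
    (zstar : Fin n → ℝ)
    (hnash : ∀ i, ∀ x : ℝ, U i (Function.update zstar i x) ≤ U i zstar) :
    (∀ i, 0 < χ i (fun _ => m i)) ∧
    ∀ y : Fin n → ℝ,
      (⨆ i, χ i zstar) ≤ (⨆ i, χ i zstar / χ i (fun _ => m i)) * (⨆ i, χ i y) ∧
      (∑ i, χ i zstar) ≤ (∑ i, χ i zstar / χ i (fun _ => m i)) * (∑ i, χ i y) := by
  haveI : Nonempty (Fin n) := Fin.pos_iff_nonempty.mp hn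
  have hBpos : 0 < B := by
    rw [hB]; exact Finset.sum_pos (fun i _ => hr i) Finset.univ_nonempty
  have hχ' : ∀ i z, χ i z =
      (w i * r i / (2 * B)) * (z i - p i) ^ 2
      + (1 / 2) * (∑ k, (a i k * r k / B) * (z k - z i) ^ 2)
      + (z i) ^ 4 / (4 * r i) := by
    intro i z; rw [hχ, hU]; ring
  -- m i ≠ 0
  have hm0 : ∀ i, m i ≠ 0 := by
    intro i h0
    have h := hm i
    rw [h0] at h
    have h' : w i * r i / B * p i = 0 := by linear_combination h
    rcases mul_eq_zero.mp h' with h1 | h1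
    · exact absurd h1 (ne_of_gt (div_pos (mul_pos (hw i) (hr i)) hBpos))
    · exact hp i h1
  -- value of χ at constant profile m i
  have hcval : ∀ i, χ i (fun _ => m i) =
      (w i * r i / (2 * B)) * (m i - p i) ^ 2 + (m i) ^ 4 / (4 * r i) := by
    intro i
    rw [hχ']
    simp
  have hcpos : ∀ i, 0 < χ i (fun _ => m i) := by
    intro i
    rw [hcval i]
    have h1 : 0 ≤ (w i * r i / (2 * B)) * (m i - p i) ^ 2 :=
      mul_nonneg (div_nonneg (mul_nonneg (hw i).le (hr i).le) (by linarith)) (sq_nonneg _)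
    have hsq : 0 < (m i) ^ 2 :=
      lt_of_le_of_ne (sq_nonneg _) (Ne.symm (pow_ne_zero 2 (hm0 i)))
    have h4 : 0 < (m i) ^ 4 := by nlinarith [hsq]
    have h2 : 0 < (m i) ^ 4 / (4 * r i) := div_pos h4 (by linarith [hr i])
    linarith
  -- key lemma: χ i (m i · 1) is a global minimum of χ i
  have hmin : ∀ i (z : Fin n → ℝ), χ i (fun _ => m i) ≤ χ i z := by
    intro i z
    rw [hcval i, hχ']
    have hri : 0 < r i := hr i
    have hsum : 0 ≤ (1 / 2) * (∑ k, (a i k * r k / B) * (z k - z i) ^ 2) := by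
      apply mul_nonneg (by norm_num)
      apply Finset.sum_nonneg
      intro k _
      exact mul_nonneg
        (div_nonneg (mul_nonneg (hpos i k) (hr k).le) hBpos.le) (sq_nonneg _)
    have hself : (w i * r i / (2 * B)) * (m i - p i) ^ 2 + (m i) ^ 4 / (4 * r i)
        ≤ (w i * r i / (2 * B)) * (z i - p i) ^ 2 + (z i) ^ 4 / (4 * r i) := by
      have h := hm i
      have hE : w i * r i * (m i - p i) * r i = -(B * (m i) ^ 3) := by
        field_simp at h
        linarith [h]
      set x := z i with hx
      set s := m i with hs
      have identity :
          2 * (w i * r i) * r i * ((x - p i) ^ 2 - (s - p i) ^ 2) + B * (x ^ 4 - s ^ 4)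
          = 2 * (w i * r i) * r i * (x - s) ^ 2
            + B * (x - s) ^ 2 * ((x + s) ^ 2 + 2 * s ^ 2)
            + 4 * (w i * r i * (s - p i) * r i + B * s ^ 3) * (x - s) := by ring
      have key : 0 ≤ 2 * (w i * r i) * r i * ((x - p i) ^ 2 - (s - p i) ^ 2)
          + B * (x ^ 4 - s ^ 4) := by
        rw [identity]
        have t1 : 0 ≤ 2 * (w i * r i) * r i * (x - s) ^ 2 :=
          mul_nonneg (mul_nonneg (mul_nonneg (by norm_num : (0:ℝ) ≤ 2)
            (mul_pos (hw i) (hr i)).le) hri.le) (sq_nonneg _)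
        have t2 : 0 ≤ B * (x - s) ^ 2 * ((x + s) ^ 2 + 2 * s ^ 2) := by
          apply mul_nonneg (mul_nonneg hBpos.le (sq_nonneg _))
          nlinarith [sq_nonneg (x + s), sq_nonneg s]
        have t3 : w i * r i * (s - p i) * r i + B * s ^ 3 = 0 := by
          rw [hE]; ring
        rw [t3]
        linarith
      rw [← sub_nonneg]
      have h4 : (0:ℝ) < 4 * B * r i := by nlinarith [hBpos, hri]
      have heq : ((w i * r i / (2 * B)) * (x - p i) ^ 2 + x ^ 4 / (4 * r i)
          - ((w i * r i / (2 * B)) * (s - p i) ^ 2 + s ^ 4 / (4 * r i))) * (4 * B * r i)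
          = 2 * (w i * r i) * r i * ((x - p i) ^ 2 - (s - p i) ^ 2)
            + B * (x ^ 4 - s ^ 4) := by
        field_simp
        ring
      nlinarith [key, h4, heq]
    linarith
  refine ⟨hcpos, fun y => ?_⟩
  have hzpos : ∀ i, 0 < χ i zstar := fun i => lt_of_lt_of_le (hcpos i) (hmin i zstar)
  have hypos : ∀ i, 0 < χ i y := fun i => lt_of_lt_of_le (hcpos i) (hmin i y)
  have hratio : ∀ i, 0 < χ i zstar / χ i (fun _ => m i) :=
    fun i => div_pos (hzpos i) (hcpos i)
  constructor
  · apply ciSup_le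
    intro i
    have h1 : χ i zstar / χ i (fun _ => m i)
        ≤ ⨆ j, χ j zstar / χ j (fun _ => m j) :=
      le_ciSup (f := fun j => χ j zstar / χ j (fun _ => m j))
        (Set.Finite.bddAbove (Set.finite_range _)) i
    have h2 : χ i y ≤ ⨆ j, χ j y :=
      le_ciSup (f := fun j => χ j y) (Set.Finite.bddAbove (Set.finite_range _)) i
    calc χ i zstar
        = (χ i zstar / χ i (fun _ => m i)) * χ i (fun _ => m i) := by
          rw [div_mul_cancel₀ _ (ne_of_gt (hcpos i))]
      _ ≤ (⨆ j, χ j zstar / χ j (fun _ => m j)) * (⨆ j, χ j y) := by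
          apply mul_le_mul h1 (le_trans (hmin i y) h2) (le_of_lt (hcpos i))
          exact le_trans (le_of_lt (hratio i)) h1
  · calc (∑ i, χ i zstar)
        ≤ ∑ i, (χ i zstar / χ i (fun _ => m i)) * (χ i y) := by
          apply Finset.sum_le_sum
          intro i _
          calc χ i zstar
              = (χ i zstar / χ i (fun _ => m i)) * χ i (fun _ => m i) := by
                rw [div_mul_cancel₀ _ (ne_of_gt (hcpos i))]
            _ ≤ (χ i zstar / χ i (fun _ => m i)) * χ i y :=
                mul_le_mul_of_nonneg_left (hmin i y) (le_of_lt (hratio i))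
      _ ≤ ∑ i, (χ i zstar / χ i (fun _ => m i)) * (∑ j, χ j y) := by
          apply Finset.sum_le_sum
          intro i _
          exact mul_le_mul_of_nonneg_left
            (Finset.single_le_sum (fun j _ => le_of_lt (hypos j)) (Finset.mem_univ i))
            (le_of_lt (hratio i))
      _ = (∑ i, χ i zstar / χ i (fun _ => m i)) * (∑ i, χ i y) := by
          rw [← Finset.sum_mul]
end

section
/- (Consensus equilibrium is socially optimal) Suppose a_{ik} ≥ 0 for all i,k (no antagonistic relations) and m_i = m for every i, for some m ∈ ℝ (so that m·1 is the consensus equilibrium). Then the consensus profile m·1 minimizes both the egalitarian cost and the utilitarian cost over ℝⁿ: for every z ∈ ℝⁿ, max_i χ_i(m·1) ≤ max_i χ_i(z) and ∑_i χ_i(m·1) ≤ ∑_i χ_i(z). Consequently the egalitarian and utilitarian prices of anarchy equal 1. -/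
open Finset

lemma consensus_key (c r x m p : ℝ) (hc : 0 ≤ c) (hr : 0 < r)
    (hm : 2 * c * r * (m - p) = -m ^ 3) :
    c * (m - p) ^ 2 + m ^ 4 / (4 * r) ≤ c * (x - p) ^ 2 + x ^ 4 / (4 * r) := by
  rw [← sub_nonneg]
  have h4r : (0:ℝ) < 4 * r := by linarith
  have heq : c * (x - p) ^ 2 + x ^ 4 / (4 * r) - (c * (m - p) ^ 2 + m ^ 4 / (4 * r)) =
      (4 * r * c * ((x - p) ^ 2 - (m - p) ^ 2) + (x ^ 4 - m ^ 4)) / (4 * r) := by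
    field_simp; ring
  rw [heq]
  apply div_nonneg _ h4r.le
  have h2 : 4 * (x - m) * (2 * c * r * (m - p)) = 4 * (x - m) * (-m ^ 3) := by rw [hm]
  nlinarith [h2, mul_nonneg (sq_nonneg (x - m)) (by nlinarith [sq_nonneg (x + m), sq_nonneg m] :
      (0:ℝ) ≤ x ^ 2 + 2 * m * x + 3 * m ^ 2),
    mul_nonneg (mul_nonneg hr.le hc) (sq_nonneg (x - m))]

/-- A consensus equilibrium is socially optimal: without antagonistic relations, if
all the roots `m_i` coincide at `m`, the consensus profile `m·1` minimizes both the
egalitarian cost `max_i χ_i` and the utilitarian cost `∑_i χ_i` over `ℝⁿ` (hence the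
egalitarian and utilitarian prices of anarchy equal 1). -/
theorem consensus_equilibrium_socially_optimal
    (n : ℕ) (hn : 0 < n) (p w r : Fin n → ℝ) (a : Fin n → Fin n → ℝ)
    (hw : ∀ i, 0 < w i) (hr : ∀ i, 0 < r i)
    (B : ℝ) (hB : B = ∑ k, r k)
    (hpos : ∀ i k, 0 ≤ a i k)
    (χ : Fin n → (Fin n → ℝ) → ℝ)
    (hχ : ∀ i z, χ i z =
      -(-(w i * r i / (2 * B)) * (z i - p i) ^ 2
        - (1 / 2) * (∑ k, (a i k * r k / B) * (z k - z i) ^ 2)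
        - (z i) ^ 4 / (4 * r i)))
    (m : ℝ)
    (hm : ∀ i, -(w i * r i / B) * (m - p i) - m ^ 3 / r i = 0) :
    ∀ z : Fin n → ℝ,
      (⨆ i, χ i (fun _ => m)) ≤ (⨆ i, χ i z) ∧
      (∑ i, χ i (fun _ => m)) ≤ (∑ i, χ i z) := by
  have hBpos : 0 < B := by
    rw [hB]; exact Finset.sum_pos (fun k _ => hr k) (Finset.univ_nonempty_iff.mpr ⟨⟨0, hn⟩⟩)
  intro z
  have hpt : ∀ i, χ i (fun _ => m) ≤ χ i z := by
    intro i
    rw [hχ i, hχ i]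
    have hsum0 : (∑ k, (a i k * r k / B) * ((m : ℝ) - m) ^ 2) = 0 := by
      simp
    have hsumnn : 0 ≤ ∑ k, (a i k * r k / B) * (z k - z i) ^ 2 :=
      Finset.sum_nonneg fun k _ => mul_nonneg
        (div_nonneg (mul_nonneg (hpos i k) (hr k).le) hBpos.le) (sq_nonneg _)
    have hc : (0:ℝ) ≤ w i * r i / (2 * B) := by
      apply div_nonneg (mul_nonneg (hw i).le (hr i).le); linarith
    have hkey := consensus_key (w i * r i / (2 * B)) (r i) (z i) m (p i) hc (hr i) ?_
    · simp only [hsum0]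
      nlinarith [hkey, hsumnn]
    · have h := hm i
      have hrne := (hr i).ne'
      have hBne := hBpos.ne'
      field_simp [hrne, hBne] at h ⊢
      nlinarith [h]
  refine ⟨?_, Finset.sum_le_sum fun i _ => hpt i⟩
  exact ciSup_mono (Set.Finite.bddAbove (Set.finite_range _)) hpt
end

section
/- (Equal period of oscillations in the two-agent dynamics) Let (z_1, z_2) : ℝ → ℝ² be a solution of the two-agent opinion dynamics. Suppose z_1 is periodic with fundamental period T_1 > 0 (T_1 is a period of z_1 and no T ∈ (0, T_1) is a period) and z_2 is periodic with fundamental period T_2 > 0. Then T_1 = T_2. -/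
/-- If `z` solves an autonomous scalar gradient ODE `z' = f(z)` on `[0,∞)` (with `F' = f`)
and is periodic with period `T > 0` there, then `z` is constant on `[0,∞)`. -/
lemma const_of_autonomous_periodic (f F : ℝ → ℝ) (hF : ∀ x, HasDerivAt F (f x) x)
    (z : ℝ → ℝ) (hz : Continuous z)
    (hsol : ∀ t : ℝ, 0 ≤ t → HasDerivAt z (f (z t)) t)
    (T : ℝ) (hT : 0 < T) (hper : ∀ t : ℝ, 0 ≤ t → z (t + T) = z t) :
    ∀ t : ℝ, 0 ≤ t → z t = z 0 := by
  have hFd : Differentiable ℝ F := fun x => (hF x).differentiableAt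
  have hFc : Continuous F := hFd.continuous
  set G : ℝ → ℝ := fun t => F (z t) with hGdef
  have hGc : Continuous G := hFc.comp hz
  have hG : ∀ t : ℝ, 0 ≤ t → HasDerivAt G (f (z t) * f (z t)) t := fun t ht =>
    (hF (z t)).comp t (hsol t ht)
  have hGmono : MonotoneOn G (Set.Ici (0:ℝ)) := by
    apply monotoneOn_of_deriv_nonneg (convex_Ici 0) hGc.continuousOn
    · intro x hx
      rw [interior_Ici] at hx
      exact (hG x (le_of_lt hx)).differentiableAt.differentiableWithinAt
    · intro x hx
      rw [interior_Ici] at hx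
      rw [(hG x (le_of_lt hx)).deriv]
      exact mul_self_nonneg _
  have hGper : ∀ t : ℝ, 0 ≤ t → G (t + T) = G t := fun t ht => congrArg F (hper t ht)
  have hGn : ∀ n : ℕ, G (n * T) = G 0 := by
    intro n
    induction n with
    | zero => simp
    | succ n ih =>
      have h0 : (0:ℝ) ≤ n * T := by positivity
      have := hGper (n * T) h0
      calc G ((n + 1 : ℕ) * T) = G (n * T + T) := by push_cast; ring_nf
        _ = G (n * T) := this
        _ = G 0 := ih
  have hGconst : ∀ t : ℝ, 0 ≤ t → G t = G 0 := by
    intro t ht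
    obtain ⟨n, hn⟩ := exists_nat_ge (t / T)
    have hle : t ≤ n * T := by
      rw [div_le_iff₀ hT] at hn; linarith
    have h1 : G 0 ≤ G t := hGmono Set.self_mem_Ici ht ht
    have h2 : G t ≤ G (n * T) := hGmono ht (Set.mem_Ici.mpr (by positivity)) hle
    rw [hGn n] at h2
    linarith
  have hderiv0 : ∀ t : ℝ, 0 < t → f (z t) = 0 := by
    intro t ht
    have hEq : G =ᶠ[nhds t] fun _ => G 0 := by
      filter_upwards [Ioi_mem_nhds ht] with s hs using hGconst s (le_of_lt (Set.mem_Ioi.mp hs))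
    have h0 : HasDerivAt G 0 t := (hasDerivAt_const t (G 0)).congr_of_eventuallyEq hEq
    have := (hG t (le_of_lt ht)).unique h0
    exact mul_self_eq_zero.mp this
  -- z has zero derivative on (0,∞), hence constant on [0,∞)
  have hzmono : MonotoneOn z (Set.Ici (0:ℝ)) := by
    apply monotoneOn_of_deriv_nonneg (convex_Ici 0) hz.continuousOn
    · intro x hx
      rw [interior_Ici] at hx
      exact (hsol x (le_of_lt hx)).differentiableAt.differentiableWithinAt
    · intro x hx
      rw [interior_Ici] at hx
      rw [(hsol x (le_of_lt hx)).deriv, hderiv0 x hx]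
  have hzanti : AntitoneOn z (Set.Ici (0:ℝ)) := by
    apply antitoneOn_of_deriv_nonpos (convex_Ici 0) hz.continuousOn
    · intro x hx
      rw [interior_Ici] at hx
      exact (hsol x (le_of_lt hx)).differentiableAt.differentiableWithinAt
    · intro x hx
      rw [interior_Ici] at hx
      rw [(hsol x (le_of_lt hx)).deriv, hderiv0 x hx]
  intro t ht
  exact le_antisymm (hzanti Set.self_mem_Ici ht ht) (hzmono Set.self_mem_Ici ht ht)

/-- Transfer of a period from `z₁` to `z₂` through the coupled equation. -/
lemma period_transfer (g : ℝ → ℝ) (K : ℝ) (hK : K ≠ 0) (z₁ z₂ : ℝ → ℝ)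
    (hd₁ : Differentiable ℝ z₁) (hc₂ : Continuous z₂)
    (hsol : ∀ t : ℝ, 0 ≤ t → HasDerivAt z₁ (g (z₁ t) + K * (z₂ t - z₁ t)) t)
    (T : ℝ) (hT : 0 < T) (hper : ∀ t : ℝ, 0 ≤ t → z₁ (t + T) = z₁ t) :
    ∀ t : ℝ, 0 ≤ t → z₂ (t + T) = z₂ t := by
  have hderiv_per : ∀ t : ℝ, 0 < t → deriv z₁ (t + T) = deriv z₁ t := by
    intro t ht
    have h1 : HasDerivAt (fun s => z₁ (s + T)) (deriv z₁ (t + T)) t := by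
      have h := (hd₁ (t + T)).hasDerivAt
      have := h.comp t ((hasDerivAt_id t).add_const T)
      rw [mul_one] at this; exact this
    have h2 : (fun s => z₁ (s + T)) =ᶠ[nhds t] z₁ := by
      filter_upwards [Ioi_mem_nhds ht] with s hs using hper s (le_of_lt (Set.mem_Ioi.mp hs))
    have h3 : HasDerivAt z₁ (deriv z₁ (t + T)) t := h1.congr_of_eventuallyEq h2.symm
    exact h3.unique (hd₁ t).hasDerivAt
  have key : ∀ t : ℝ, 0 < t → z₂ (t + T) = z₂ t := by
    intro t ht
    have hT' : (0:ℝ) ≤ t + T := by linarith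
    have e1 : deriv z₁ t = g (z₁ t) + K * (z₂ t - z₁ t) := (hsol t (le_of_lt ht)).deriv
    have e2 : deriv z₁ (t + T) = g (z₁ (t + T)) + K * (z₂ (t + T) - z₁ (t + T)) :=
      (hsol (t + T) hT').deriv
    rw [hderiv_per t ht, hper t (le_of_lt ht)] at e2
    have : K * (z₂ (t + T) - z₁ t) = K * (z₂ t - z₁ t) := by linarith
    have := mul_left_cancel₀ hK this
    linarith
  intro t ht
  rcases eq_or_lt_of_le ht with h0 | h0
  · -- t = 0 : use continuity of z₂ and the result for t > 0
    subst h0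
    have h1 : Filter.Tendsto (fun s => z₂ (s + T)) (nhdsWithin 0 (Set.Ioi 0)) (nhds (z₂ (0 + T))) :=
      ((hc₂.comp (continuous_id.add continuous_const)).continuousAt).continuousWithinAt.tendsto
    have h2 : Filter.Tendsto z₂ (nhdsWithin 0 (Set.Ioi 0)) (nhds (z₂ 0)) :=
      hc₂.continuousAt.continuousWithinAt.tendsto
    have h1' : Filter.Tendsto z₂ (nhdsWithin 0 (Set.Ioi 0)) (nhds (z₂ (0 + T))) := by
      apply h1.congr'
      filter_upwards [self_mem_nhdsWithin] with s hs using key s (Set.mem_Ioi.mp hs)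
    exact tendsto_nhds_unique h1' h2
  · exact key t h0
lemma hasDerivAt_potential (w r B p : ℝ) (hr : r ≠ 0) (x : ℝ) :
    HasDerivAt (fun y : ℝ => -(w*r/B)*(y^2/2 - p*y) - y^4/(4*r))
      (-(w*r/B)*(x-p) - x^3/r) x := by
  have h1 : HasDerivAt (fun y : ℝ => y^2) (2*x) x := by simpa using hasDerivAt_pow 2 x
  have h4 : HasDerivAt (fun y : ℝ => y^4) (4*x^3) x := by simpa using hasDerivAt_pow 4 x
  have hp : HasDerivAt (fun y : ℝ => p*y) p x := by simpa using (hasDerivAt_id x).const_mul p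
  have := (((h1.div_const 2).sub hp).const_mul (-(w*r/B))).sub (h4.div_const (4*r))
  refine this.congr_deriv ?_
  field_simp

/-- Equal period of oscillations in the two-agent opinion dynamics: if both opinion
components are periodic with fundamental periods `T₁` and `T₂`, then `T₁ = T₂`. -/
theorem two_agent_equal_fundamental_periods
    (w₁ w₂ r₁ r₂ : ℝ) (hw₁ : 0 < w₁) (hw₂ : 0 < w₂) (hr₁ : 0 < r₁) (hr₂ : 0 < r₂)
    (c₁ c₂ p₁ p₂ : ℝ) (B : ℝ) (hB : B = r₁ + r₂)
    (z₁ z₂ : ℝ → ℝ)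
    (hd₁ : Differentiable ℝ z₁) (hd₂ : Differentiable ℝ z₂)
    (hsol₁ : ∀ t : ℝ, 0 ≤ t → HasDerivAt z₁
      ((-(w₁ * r₁ / B) * (z₁ t - p₁) - (z₁ t) ^ 3 / r₁)
        + (c₁ * r₂ / B) * (z₂ t - z₁ t)) t)
    (hsol₂ : ∀ t : ℝ, 0 ≤ t → HasDerivAt z₂
      ((-(w₂ * r₂ / B) * (z₂ t - p₂) - (z₂ t) ^ 3 / r₂)
        - (c₂ * r₁ / B) * (z₂ t - z₁ t)) t)
    (T₁ T₂ : ℝ) (hT₁ : 0 < T₁) (hT₂ : 0 < T₂)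
    (hper₁ : ∀ t : ℝ, 0 ≤ t → z₁ (t + T₁) = z₁ t)
    (hfund₁ : ∀ T : ℝ, 0 < T → T < T₁ → ¬ (∀ t : ℝ, 0 ≤ t → z₁ (t + T) = z₁ t))
    (hper₂ : ∀ t : ℝ, 0 ≤ t → z₂ (t + T₂) = z₂ t)
    (hfund₂ : ∀ T : ℝ, 0 < T → T < T₂ → ¬ (∀ t : ℝ, 0 ≤ t → z₂ (t + T) = z₂ t)) :
    T₁ = T₂ := by
  have hBpos : 0 < B := by rw [hB]; linarith
  set f₁ : ℝ → ℝ := fun x => -(w₁ * r₁ / B) * (x - p₁) - x ^ 3 / r₁ with hf₁def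
  set f₂ : ℝ → ℝ := fun x => -(w₂ * r₂ / B) * (x - p₂) - x ^ 3 / r₂ with hf₂def
  by_cases hc₁0 : c₁ = 0
  · exfalso
    have hsol' : ∀ t : ℝ, 0 ≤ t → HasDerivAt z₁ (f₁ (z₁ t)) t := by
      intro t ht
      simpa [hf₁def, hc₁0] using hsol₁ t ht
    have hconst := const_of_autonomous_periodic f₁
      (fun y : ℝ => -(w₁*r₁/B)*(y^2/2 - p₁*y) - y^4/(4*r₁))
      (fun x => hasDerivAt_potential w₁ r₁ B p₁ hr₁.ne' x)
      z₁ hd₁.continuous hsol' T₁ hT₁ hper₁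
    apply hfund₁ (T₁/2) (by linarith) (by linarith)
    intro t ht
    rw [hconst (t + T₁/2) (by linarith), hconst t ht]
  by_cases hc₂0 : c₂ = 0
  · exfalso
    have hsol' : ∀ t : ℝ, 0 ≤ t → HasDerivAt z₂ (f₂ (z₂ t)) t := by
      intro t ht
      simpa [hf₂def, hc₂0] using hsol₂ t ht
    have hconst := const_of_autonomous_periodic f₂
      (fun y : ℝ => -(w₂*r₂/B)*(y^2/2 - p₂*y) - y^4/(4*r₂))
      (fun x => hasDerivAt_potential w₂ r₂ B p₂ hr₂.ne' x)
      z₂ hd₂.continuous hsol' T₂ hT₂ hper₂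
    apply hfund₂ (T₂/2) (by linarith) (by linarith)
    intro t ht
    rw [hconst (t + T₂/2) (by linarith), hconst t ht]
  · have hK₁ : c₁ * r₂ / B ≠ 0 := div_ne_zero (mul_ne_zero hc₁0 hr₂.ne') hBpos.ne'
    have hK₂ : c₂ * r₁ / B ≠ 0 := div_ne_zero (mul_ne_zero hc₂0 hr₁.ne') hBpos.ne'
    have hz₂T₁ : ∀ t : ℝ, 0 ≤ t → z₂ (t + T₁) = z₂ t :=
      period_transfer f₁ (c₁ * r₂ / B) hK₁ z₁ z₂ hd₁ hd₂.continuous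
        (fun t ht => hsol₁ t ht) T₁ hT₁ hper₁
    have hz₁T₂ : ∀ t : ℝ, 0 ≤ t → z₁ (t + T₂) = z₁ t :=
      period_transfer f₂ (c₂ * r₁ / B) hK₂ z₂ z₁ hd₂ hd₁.continuous
        (fun t ht => by
          have h := hsol₂ t ht
          convert h using 1
          simp only [hf₂def]
          ring) T₂ hT₂ hper₂
    have h1 : ¬ T₁ < T₂ := fun h => hfund₂ T₁ hT₁ h hz₂T₁
    have h2 : ¬ T₂ < T₁ := fun h => hfund₁ T₂ hT₂ h hz₁T₂
    linarith [not_lt.mp h1, not_lt.mp h2]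
end

section
/- (Necessary conditions for existence of periodic solutions of the two-agent dynamics) Let (z_1, z_2) : ℝ → ℝ² be a solution of the two-agent opinion dynamics that is periodic with some period T > 0 and is not constant. Then all of the following hold: (i) c_1 < 0 or c_2 < 0; (ii) c_1·c_2 ≠ 0; and (iii) c_2 r_1 + w_1 r_1 + w_2 r_2 + c_1 r_2 < 0. -/
open MeasureTheory Set

lemma aux_zero_of_integral_zero {f : ℝ → ℝ} {T : ℝ} (hT : 0 < T)
    (hf : Continuous f) (hnn : ∀ t, 0 ≤ f t)
    (hint : ∫ t in (0:ℝ)..T, f t = 0) : ∀ t ∈ Icc (0:ℝ) T, f t = 0 := by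
  intro t₀ ht₀
  by_contra hne
  have hpos : 0 < f t₀ := lt_of_le_of_ne (hnn t₀) (Ne.symm hne)
  have hae : f =ᵐ[volume.restrict (Ioc (0:ℝ) T)] 0 := by
    rw [← intervalIntegral.integral_eq_zero_iff_of_le_of_nonneg_ae hT.le
      (ae_of_all _ fun x => hnn x) (hf.intervalIntegrable 0 T)]
    exact hint
  have hU : IsOpen (f ⁻¹' Ioi 0) := isOpen_Ioi.preimage hf
  obtain ⟨δ, hδ, hball⟩ := Metric.isOpen_iff.1 hU t₀ hpos
  set c := max 0 (t₀ - δ/2) with hc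
  set d := min T (t₀ + δ/2) with hd
  have hcd : c < d := by
    apply max_lt
    · apply lt_min hT; linarith [ht₀.1, hδ]
    · apply lt_min (by linarith [ht₀.2, hδ]) (by linarith [hδ])
  have hsub : Ioc c d ⊆ {x | f x ≠ 0} ∩ Ioc 0 T := by
    intro x hx
    constructor
    · have hxU : x ∈ f ⁻¹' Ioi 0 := by
        apply hball
        rw [Metric.mem_ball, Real.dist_eq, abs_sub_lt_iff]
        constructor
        · have := hx.2.trans (min_le_right T (t₀ + δ/2)); linarith
        · have := (le_max_right 0 (t₀ - δ/2)).trans_lt hx.1; linarith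
      exact ne_of_gt hxU
    · exact ⟨(le_max_left 0 _).trans_lt hx.1, hx.2.trans (min_le_left _ _)⟩
  have h0 : volume ({x | f x ≠ 0} ∩ Ioc (0:ℝ) T) = 0 := by
    have := hae
    rw [Filter.EventuallyEq, ae_restrict_iff' measurableSet_Ioc] at this
    rw [ae_iff] at this
    convert this using 2
    ext x
    simp only [mem_inter_iff, mem_setOf_eq, Pi.zero_apply]
    tauto
  have : volume (Ioc c d) = 0 := measure_mono_null hsub h0
  rw [Real.volume_Ioc] at this
  simp only [ENNReal.ofReal_eq_zero] at this
  linarith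

lemma aux_periodic_reduce {T : ℝ} (hT : 0 < T) {u : ℝ → ℝ}
    (hu : ∀ t, 0 ≤ t → u (t + T) = u t) :
    ∀ t, 0 ≤ t → ∃ s, 0 ≤ s ∧ s ≤ T ∧ u s = u t := by
  have key : ∀ n : ℕ, ∀ t, 0 ≤ t → t ≤ n * T → ∃ s, 0 ≤ s ∧ s ≤ T ∧ u s = u t := by
    intro n
    induction n with
    | zero => intro t ht ht'; exact ⟨t, ht, by simp at ht'; linarith, rfl⟩
    | succ k ih =>
      intro t ht ht'
      by_cases h : t ≤ T
      · exact ⟨t, ht, h, rfl⟩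
      · push_neg at h
        have h1 : 0 ≤ t - T := by linarith
        have h2 : t - T ≤ k * T := by push_cast at ht' ⊢; linarith
        obtain ⟨s, hs0, hsT, hus⟩ := ih (t - T) h1 h2
        refine ⟨s, hs0, hsT, ?_⟩
        rw [hus]
        have := hu (t - T) h1
        rw [sub_add_cancel] at this
        exact this.symm
  intro t ht
  obtain ⟨n, hn⟩ := exists_nat_ge (t / T)
  exact key n t ht (by rw [div_le_iff₀ hT] at hn; linarith)

set_option maxHeartbeats 1600000 in
/-- Necessary conditions for the existence of non-constant periodic solutions of the
two-agent opinion dynamics: (i) `c₁ < 0` or `c₂ < 0`; (ii) `c₁ c₂ ≠ 0`;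
(iii) `c₂r₁ + w₁r₁ + w₂r₂ + c₁r₂ < 0`. -/
theorem two_agent_periodic_necessary_conditions
    (w₁ w₂ r₁ r₂ : ℝ) (hw₁ : 0 < w₁) (hw₂ : 0 < w₂) (hr₁ : 0 < r₁) (hr₂ : 0 < r₂)
    (c₁ c₂ p₁ p₂ : ℝ) (B : ℝ) (hB : B = r₁ + r₂)
    (z₁ z₂ : ℝ → ℝ)
    (hd₁ : Differentiable ℝ z₁) (hd₂ : Differentiable ℝ z₂)
    (hsol₁ : ∀ t : ℝ, 0 ≤ t → HasDerivAt z₁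
      ((-(w₁ * r₁ / B) * (z₁ t - p₁) - (z₁ t) ^ 3 / r₁)
        + (c₁ * r₂ / B) * (z₂ t - z₁ t)) t)
    (hsol₂ : ∀ t : ℝ, 0 ≤ t → HasDerivAt z₂
      ((-(w₂ * r₂ / B) * (z₂ t - p₂) - (z₂ t) ^ 3 / r₂)
        - (c₂ * r₁ / B) * (z₂ t - z₁ t)) t)
    (T : ℝ) (hT : 0 < T)
    (hper : ∀ t : ℝ, 0 ≤ t → z₁ (t + T) = z₁ t ∧ z₂ (t + T) = z₂ t)
    (hnonconst : ∃ t₁ t₂ : ℝ, 0 ≤ t₁ ∧ 0 ≤ t₂ ∧ (z₁ t₁, z₂ t₁) ≠ (z₁ t₂, z₂ t₂)) :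
    (c₁ < 0 ∨ c₂ < 0) ∧ c₁ * c₂ ≠ 0 ∧ c₂ * r₁ + w₁ * r₁ + w₂ * r₂ + c₁ * r₂ < 0 := by
  have hBpos : 0 < B := by rw [hB]; linarith
  have hB0 : B ≠ 0 := ne_of_gt hBpos
  have hr₁0 : r₁ ≠ 0 := ne_of_gt hr₁
  have hr₂0 : r₂ ≠ 0 := ne_of_gt hr₂
  have hcz₁ : Continuous z₁ := hd₁.continuous
  have hcz₂ : Continuous z₂ := hd₂.continuous
  have hT1 : z₁ T = z₁ 0 := by simpa using (hper 0 le_rfl).1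
  have hT2 : z₂ T = z₂ 0 := by simpa using (hper 0 le_rfl).2
  set a : ℝ := c₁ * r₂ / B with ha
  set b : ℝ := c₂ * r₁ / B with hb
  set F₁ : ℝ → ℝ := fun t =>
    (-(w₁ * r₁ / B) * (z₁ t - p₁) - (z₁ t) ^ 3 / r₁) + a * (z₂ t - z₁ t) with hF₁
  set F₂ : ℝ → ℝ := fun t =>
    (-(w₂ * r₂ / B) * (z₂ t - p₂) - (z₂ t) ^ 3 / r₂) - b * (z₂ t - z₁ t) with hF₂
  have hsol₁' : ∀ t : ℝ, 0 ≤ t → HasDerivAt z₁ (F₁ t) t := fun t ht => hsol₁ t ht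
  have hsol₂' : ∀ t : ℝ, 0 ≤ t → HasDerivAt z₂ (F₂ t) t := fun t ht => hsol₂ t ht
  have hcF₁ : Continuous F₁ := by rw [hF₁]; fun_prop
  have hcF₂ : Continuous F₂ := by rw [hF₂]; fun_prop
  -- FTC helper
  have hFTC : ∀ (G g : ℝ → ℝ), (∀ t ∈ Icc (0:ℝ) T, HasDerivAt G (g t) t) →
      Continuous g → G T = G 0 → ∫ t in (0:ℝ)..T, g t = 0 := by
    intro G g hd hc hGT
    rw [intervalIntegral.integral_eq_sub_of_hasDerivAt
      (by rwa [uIcc_of_le hT.le]) (hc.intervalIntegrable 0 T), hGT, sub_self]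
  -- constancy from vanishing derivative on [0,T]
  have hconstOf : ∀ (z F : ℝ → ℝ), (∀ t, 0 ≤ t → HasDerivAt z (F t) t) →
      Continuous F → (∀ s ∈ Icc (0:ℝ) T, F s = 0) → ∀ t ∈ Icc (0:ℝ) T, z t = z 0 := by
    intro z F hzF hFc hF0 t ht
    have h := intervalIntegral.integral_eq_sub_of_hasDerivAt (f := z) (f' := F)
      (a := 0) (b := t) (fun s hs => hzF s (by rw [uIcc_of_le ht.1] at hs; exact hs.1))
      (hFc.intervalIntegrable 0 t)
    have hzero : ∫ s in (0:ℝ)..t, F s = 0 := by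
      rw [intervalIntegral.integral_congr (g := fun _ => (0:ℝ))
        (fun s hs => by rw [uIcc_of_le ht.1] at hs; exact hF0 s ⟨hs.1, hs.2.trans ht.2⟩)]
      simp
    rw [hzero] at h; linarith
  -- vanishing from zero integral of square
  have hzeroOf : ∀ (G : ℝ → ℝ), Continuous G → (∫ t in (0:ℝ)..T, (G t)^2) = 0 →
      ∀ t ∈ Icc (0:ℝ) T, G t = 0 := by
    intro G hG hint t ht
    have := aux_zero_of_integral_zero hT (hG.pow 2) (fun t => sq_nonneg (G t)) hint t ht
    exact pow_eq_zero_iff (by norm_num) |>.1 this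
  -- core contradiction lemmas
  have hcore₁ : (∀ t ∈ Icc (0:ℝ) T, z₁ t = z₁ 0) → False := by
    intro hK
    have hI2zero : ∫ t in (0:ℝ)..T, (F₂ t)^2 = 0 := by
      apply hFTC (fun t => (-(w₂*r₂/B)/2 - b/2) * (z₂ t)^2
        + (w₂*r₂/B*p₂ + b * z₁ 0) * z₂ t + (-(1/(4*r₂))) * (z₂ t)^4)
      · intro t ht
        have h := hsol₂' t ht.1
        have h2 := (h.pow 2).const_mul (-(w₂*r₂/B)/2 - b/2)
        have h1 := h.const_mul (w₂*r₂/B*p₂ + b * z₁ 0)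
        have h4 := (h.pow 4).const_mul (-(1/(4*r₂)))
        have hcomb := (h2.add h1).add h4
        refine HasDerivAt.congr_deriv hcomb ?_
        have hzt : z₁ t = z₁ 0 := hK t ht
        simp only [hF₂]
        rw [hzt]
        push_cast
        ring
      · fun_prop
      · rw [hT2]
    have hF₂0 := hzeroOf F₂ hcF₂ hI2zero
    have hK₂ := hconstOf z₂ F₂ hsol₂' hcF₂ hF₂0
    obtain ⟨t₁, t₂, h1, h2, hne⟩ := hnonconst
    apply hne
    have e₁ : ∀ t, 0 ≤ t → z₁ t = z₁ 0 := by
      intro t ht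
      obtain ⟨s, hs0, hsT, hus⟩ := aux_periodic_reduce hT (fun t ht => (hper t ht).1) t ht
      rw [← hus]; exact hK s ⟨hs0, hsT⟩
    have e₂ : ∀ t, 0 ≤ t → z₂ t = z₂ 0 := by
      intro t ht
      obtain ⟨s, hs0, hsT, hus⟩ := aux_periodic_reduce hT (fun t ht => (hper t ht).2) t ht
      rw [← hus]; exact hK₂ s ⟨hs0, hsT⟩
    rw [e₁ t₁ h1, e₁ t₂ h2, e₂ t₁ h1, e₂ t₂ h2]
  have hcore₂ : (∀ t ∈ Icc (0:ℝ) T, z₂ t = z₂ 0) → False := by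
    intro hK
    have hI1zero : ∫ t in (0:ℝ)..T, (F₁ t)^2 = 0 := by
      apply hFTC (fun t => (-(w₁*r₁/B)/2 - a/2) * (z₁ t)^2
        + (w₁*r₁/B*p₁ + a * z₂ 0) * z₁ t + (-(1/(4*r₁))) * (z₁ t)^4)
      · intro t ht
        have h := hsol₁' t ht.1
        have h2 := (h.pow 2).const_mul (-(w₁*r₁/B)/2 - a/2)
        have h1 := h.const_mul (w₁*r₁/B*p₁ + a * z₂ 0)
        have h4 := (h.pow 4).const_mul (-(1/(4*r₁)))
        have hcomb := (h2.add h1).add h4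
        refine HasDerivAt.congr_deriv hcomb ?_
        have hzt : z₂ t = z₂ 0 := hK t ht
        simp only [hF₁]
        rw [hzt]
        push_cast
        ring
      · fun_prop
      · rw [hT1]
    have hF₁0 := hzeroOf F₁ hcF₁ hI1zero
    have hK₁ := hconstOf z₁ F₁ hsol₁' hcF₁ hF₁0
    obtain ⟨t₁, t₂, h1, h2, hne⟩ := hnonconst
    apply hne
    have e₁ : ∀ t, 0 ≤ t → z₁ t = z₁ 0 := by
      intro t ht
      obtain ⟨s, hs0, hsT, hus⟩ := aux_periodic_reduce hT (fun t ht => (hper t ht).1) t ht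
      rw [← hus]; exact hK₁ s ⟨hs0, hsT⟩
    have e₂ : ∀ t, 0 ≤ t → z₂ t = z₂ 0 := by
      intro t ht
      obtain ⟨s, hs0, hsT, hus⟩ := aux_periodic_reduce hT (fun t ht => (hper t ht).2) t ht
      rw [← hus]; exact hK s ⟨hs0, hsT⟩
    rw [e₁ t₁ h1, e₁ t₂ h2, e₂ t₁ h1, e₂ t₂ h2]
  -- integrability facts
  have hint1 : IntervalIntegrable (fun t => (F₁ t)^2) volume 0 T :=
    ((hcF₁.pow 2).intervalIntegrable 0 T)
  have hint2 : IntervalIntegrable (fun t => (F₂ t)^2) volume 0 T :=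
    ((hcF₂.pow 2).intervalIntegrable 0 T)
  have hintA : IntervalIntegrable (fun t => z₂ t * F₁ t) volume 0 T :=
    ((hcz₂.mul hcF₁).intervalIntegrable 0 T)
  have hintA' : IntervalIntegrable (fun t => z₁ t * F₂ t) volume 0 T :=
    ((hcz₁.mul hcF₂).intervalIntegrable 0 T)
  have hintJ₁ : IntervalIntegrable (fun t => (z₁ t * F₁ t)^2) volume 0 T :=
    (((hcz₁.mul hcF₁).pow 2).intervalIntegrable 0 T)
  have hintJ₂ : IntervalIntegrable (fun t => (z₂ t * F₂ t)^2) volume 0 T :=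
    (((hcz₂.mul hcF₂).pow 2).intervalIntegrable 0 T)
  have hintC : IntervalIntegrable (fun t => F₁ t * F₂ t) volume 0 T :=
    ((hcF₁.mul hcF₂).intervalIntegrable 0 T)
  -- identity e1 : ∫ F₁² = a * ∫ z₂ F₁
  have e1 : (∫ t in (0:ℝ)..T, (F₁ t)^2) = a * ∫ t in (0:ℝ)..T, z₂ t * F₁ t := by
    have h0 : ∫ t in (0:ℝ)..T, ((F₁ t)^2 - a * (z₂ t * F₁ t)) = 0 := by
      apply hFTC (fun t => (-(w₁*r₁/B)/2 - a/2) * (z₁ t)^2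
        + (w₁*r₁/B*p₁) * z₁ t + (-(1/(4*r₁))) * (z₁ t)^4)
      · intro t ht
        have h := hsol₁' t ht.1
        have h2 := (h.pow 2).const_mul (-(w₁*r₁/B)/2 - a/2)
        have h1 := h.const_mul (w₁*r₁/B*p₁)
        have h4 := (h.pow 4).const_mul (-(1/(4*r₁)))
        have hcomb := (h2.add h1).add h4
        refine HasDerivAt.congr_deriv hcomb ?_
        simp only [hF₁]
        push_cast
        ring
      · fun_prop
      · rw [hT1]
    rw [intervalIntegral.integral_sub hint1 (hintA.const_mul a),
      intervalIntegral.integral_const_mul] at h0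
    linarith
  -- identity e2 : ∫ F₂² = b * ∫ z₁ F₂
  have e2 : (∫ t in (0:ℝ)..T, (F₂ t)^2) = b * ∫ t in (0:ℝ)..T, z₁ t * F₂ t := by
    have h0 : ∫ t in (0:ℝ)..T, ((F₂ t)^2 - b * (z₁ t * F₂ t)) = 0 := by
      apply hFTC (fun t => (-(w₂*r₂/B)/2 - b/2) * (z₂ t)^2
        + (w₂*r₂/B*p₂) * z₂ t + (-(1/(4*r₂))) * (z₂ t)^4)
      · intro t ht
        have h := hsol₂' t ht.1
        have h2 := (h.pow 2).const_mul (-(w₂*r₂/B)/2 - b/2)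
        have h1 := h.const_mul (w₂*r₂/B*p₂)
        have h4 := (h.pow 4).const_mul (-(1/(4*r₂)))
        have hcomb := (h2.add h1).add h4
        refine HasDerivAt.congr_deriv hcomb ?_
        simp only [hF₂]
        push_cast
        ring
      · fun_prop
      · rw [hT2]
    rw [intervalIntegral.integral_sub hint2 (hintA'.const_mul b),
      intervalIntegral.integral_const_mul] at h0
    linarith
  -- identity e3 : ∫ z₂ F₁ + ∫ z₁ F₂ = 0
  have e3 : (∫ t in (0:ℝ)..T, z₂ t * F₁ t) + (∫ t in (0:ℝ)..T, z₁ t * F₂ t) = 0 := by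
    have h0 : ∫ t in (0:ℝ)..T, (z₂ t * F₁ t + z₁ t * F₂ t) = 0 := by
      apply hFTC (fun t => z₁ t * z₂ t)
      · intro t ht
        have hcomb := (hsol₁' t ht.1).mul (hsol₂' t ht.1)
        refine HasDerivAt.congr_deriv hcomb ?_
        ring
      · fun_prop
      · rw [hT1, hT2]
    rw [intervalIntegral.integral_add hintA hintA'] at h0
    exact h0
  -- identity m1
  have m1 : (-(w₁*r₁/B) - a) * (∫ t in (0:ℝ)..T, (F₁ t)^2)
      - (3/r₁) * (∫ t in (0:ℝ)..T, (z₁ t * F₁ t)^2)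
      + a * (∫ t in (0:ℝ)..T, F₁ t * F₂ t) = 0 := by
    have h0 : ∫ t in (0:ℝ)..T, ((-(w₁*r₁/B) - a) * (F₁ t)^2
        - (3/r₁) * (z₁ t * F₁ t)^2 + a * (F₁ t * F₂ t)) = 0 := by
      apply hFTC (fun t => (F₁ t)^2/2)
      · intro t ht
        have h1 := hsol₁' t ht.1
        have h2 := hsol₂' t ht.1
        have hd1 := ((h1.sub_const p₁).const_mul (-(w₁*r₁/B))).sub ((h1.pow 3).div_const r₁)
        have hd2 := (h2.sub h1).const_mul a
        have hdF₁ : HasDerivAt F₁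
            (-(w₁*r₁/B) * F₁ t - ((3:ℕ):ℝ) * z₁ t ^ 2 * F₁ t / r₁ + a * (F₂ t - F₁ t)) t :=
          hd1.add hd2
        have hsq := (hdF₁.pow 2).div_const 2
        refine HasDerivAt.congr_deriv hsq ?_
        push_cast
        ring
      · fun_prop
      · simp only [hF₁]; rw [hT1, hT2]
    rw [intervalIntegral.integral_add ((hint1.const_mul _).sub (hintJ₁.const_mul _))
      (hintC.const_mul a), intervalIntegral.integral_sub (hint1.const_mul _)
      (hintJ₁.const_mul _), intervalIntegral.integral_const_mul,
      intervalIntegral.integral_const_mul, intervalIntegral.integral_const_mul] at h0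
    linarith
  -- identity m2
  have m2 : (-(w₂*r₂/B) - b) * (∫ t in (0:ℝ)..T, (F₂ t)^2)
      - (3/r₂) * (∫ t in (0:ℝ)..T, (z₂ t * F₂ t)^2)
      + b * (∫ t in (0:ℝ)..T, F₁ t * F₂ t) = 0 := by
    have h0 : ∫ t in (0:ℝ)..T, ((-(w₂*r₂/B) - b) * (F₂ t)^2
        - (3/r₂) * (z₂ t * F₂ t)^2 + b * (F₁ t * F₂ t)) = 0 := by
      apply hFTC (fun t => (F₂ t)^2/2)
      · intro t ht
        have h1 := hsol₁' t ht.1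
        have h2 := hsol₂' t ht.1
        have hd1 := ((h2.sub_const p₂).const_mul (-(w₂*r₂/B))).sub ((h2.pow 3).div_const r₂)
        have hd2 := ((h2.sub h1).const_mul b)
        have hdF₂ : HasDerivAt F₂
            (-(w₂*r₂/B) * F₂ t - ((3:ℕ):ℝ) * z₂ t ^ 2 * F₂ t / r₂ - b * (F₂ t - F₁ t)) t :=
          hd1.sub hd2
        have hsq := (hdF₂.pow 2).div_const 2
        refine HasDerivAt.congr_deriv hsq ?_
        push_cast
        ring
      · fun_prop
      · simp only [hF₂]; rw [hT1, hT2]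
    rw [intervalIntegral.integral_add ((hint2.const_mul _).sub (hintJ₂.const_mul _))
      (hintC.const_mul b), intervalIntegral.integral_sub (hint2.const_mul _)
      (hintJ₂.const_mul _), intervalIntegral.integral_const_mul,
      intervalIntegral.integral_const_mul, intervalIntegral.integral_const_mul] at h0
    linarith
  -- abbreviations
  set I₁ := ∫ t in (0:ℝ)..T, (F₁ t)^2 with hI₁
  set I₂ := ∫ t in (0:ℝ)..T, (F₂ t)^2 with hI₂
  set J₁ := ∫ t in (0:ℝ)..T, (z₁ t * F₁ t)^2 with hJ₁
  set J₂ := ∫ t in (0:ℝ)..T, (z₂ t * F₂ t)^2 with hJ₂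
  set A := ∫ t in (0:ℝ)..T, z₂ t * F₁ t with hA
  set A' := ∫ t in (0:ℝ)..T, z₁ t * F₂ t with hA'
  set C := ∫ t in (0:ℝ)..T, F₁ t * F₂ t with hC
  clear_value I₁ I₂ J₁ J₂ A A' C
  -- positivity
  have hJ₁nn : 0 ≤ J₁ := by
    rw [hJ₁]; exact intervalIntegral.integral_nonneg hT.le (fun u _ => sq_nonneg _)
  have hJ₂nn : 0 ≤ J₂ := by
    rw [hJ₂]; exact intervalIntegral.integral_nonneg hT.le (fun u _ => sq_nonneg _)
  have hI₁pos : 0 < I₁ := by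
    have hnn : 0 ≤ I₁ := by
      rw [hI₁]; exact intervalIntegral.integral_nonneg hT.le (fun u _ => sq_nonneg _)
    rcases hnn.lt_or_eq with h | h
    · exact h
    · exfalso
      have hF₁0 := hzeroOf F₁ hcF₁ (by rw [← hI₁]; exact h.symm)
      exact hcore₁ (hconstOf z₁ F₁ hsol₁' hcF₁ hF₁0)
  have hI₂pos : 0 < I₂ := by
    have hnn : 0 ≤ I₂ := by
      rw [hI₂]; exact intervalIntegral.integral_nonneg hT.le (fun u _ => sq_nonneg _)
    rcases hnn.lt_or_eq with h | h
    · exact h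
    · exfalso
      have hF₂0 := hzeroOf F₂ hcF₂ (by rw [← hI₂]; exact h.symm)
      exact hcore₂ (hconstOf z₂ F₂ hsol₂' hcF₂ hF₂0)
  clear hint1 hint2 hintA hintA' hintJ₁ hintJ₂ hintC hFTC hsol₁ hsol₂ hd₁ hd₂ hper hnonconst
  -- sign of a*b
  have haA : 0 < a * A := by rw [← e1]; exact hI₁pos
  have hbAeq : b * A = -I₂ := by linear_combination e2 + b * e3
  have hbA : b * A < 0 := by rw [hbAeq]; linarith
  have hA0 : A ≠ 0 := by
    intro h; rw [h, mul_zero] at haA; exact lt_irrefl _ haA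
  have hab : a * b < 0 := by
    have hprod : (a*A) * (b*A) < 0 := mul_neg_of_pos_of_neg haA hbA
    have hA2 : 0 < A^2 := by positivity
    have heq : a*b = ((a*A) * (b*A))/A^2 := by field_simp
    rw [heq]
    exact div_neg_of_neg_of_pos hprod hA2
  have hcc : c₁ * c₂ < 0 := by
    have hrel : c₁ * c₂ * (r₂ * r₁) = a * b * B^2 := by
      rw [ha, hb]; field_simp
    have hneg : a * b * B^2 < 0 := mul_neg_of_neg_of_pos hab (pow_pos hBpos 2)
    by_contra h
    push_neg at h
    have := mul_nonneg h (mul_pos hr₂ hr₁).le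
    linarith
  refine ⟨?_, ne_of_lt hcc, ?_⟩
  · rcases lt_trichotomy c₁ 0 with h | h | h
    · exact Or.inl h
    · exfalso; rw [h] at hcc; simp at hcc
    · refine Or.inr ?_
      by_contra h2
      push_neg at h2
      have := mul_nonneg h.le h2
      linarith
  -- condition (iii)
  by_contra hcon
  push_neg at hcon
  have hcomb : (-b)*(-(w₁*r₁/B) - a)*I₁ + a*(-(w₂*r₂/B) - b)*I₂
      - (-b)*(3/r₁)*J₁ - a*(3/r₂)*J₂ = 0 := by linear_combination (-b) * m1 + a * m2
  have he2 : I₂ = -(b * A) := by rw [hbAeq]; ring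
  have hSnn : 0 ≤ w₁*r₁/B + a + (w₂*r₂/B + b) := by
    rw [ha, hb]
    have hfs : w₁*r₁/B + c₁*r₂/B + (w₂*r₂/B + c₂*r₁/B)
        = (c₂*r₁ + w₁*r₁ + w₂*r₂ + c₁*r₂)/B := by ring
    rw [hfs]
    exact div_nonneg hcon hBpos.le
  have hIpart : (-b)*(-(w₁*r₁/B) - a)*I₁ + a*(-(w₂*r₂/B) - b)*I₂
      = -((-(a*b))*A*(w₁*r₁/B + a + (w₂*r₂/B + b))) := by
    rw [e1, he2]; ring
  have hJzero : J₁ = 0 := by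
    have hr₁3 : (0:ℝ) < 3/r₁ := by positivity
    have hr₂3 : (0:ℝ) < 3/r₂ := by positivity
    rcases lt_trichotomy a 0 with hau | hau | hau
    · -- a < 0, b > 0, A < 0
      have hAneg : A < 0 := by
        by_contra h; push_neg at h
        have := mul_nonpos_of_nonpos_of_nonneg hau.le h
        linarith
      have hbpos : 0 < b := by
        by_contra h; push_neg at h
        have h2 := mul_nonneg (neg_nonneg.2 hau.le) (neg_nonneg.2 h)
        rw [neg_mul_neg] at h2
        linarith
      have t1 : (-(a*b))*A ≤ 0 :=
        mul_nonpos_of_nonneg_of_nonpos (by linarith) hAneg.le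
      have h1 : 0 ≤ -((-(a*b))*A*(w₁*r₁/B + a + (w₂*r₂/B + b))) := by
        have := mul_nonpos_of_nonpos_of_nonneg t1 hSnn
        linarith
      have h2 : (-b)*(3/r₁)*J₁ ≤ 0 :=
        mul_nonpos_of_nonpos_of_nonneg
          (mul_nonpos_of_nonpos_of_nonneg (by linarith) hr₁3.le) hJ₁nn
      have h3 : a*(3/r₂)*J₂ ≤ 0 :=
        mul_nonpos_of_nonpos_of_nonneg
          (mul_nonpos_of_nonpos_of_nonneg hau.le hr₂3.le) hJ₂nn
      have hU : (-b)*(3/r₁)*J₁ = 0 := by linarith [hcomb, hIpart, h1, h2, h3]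
      have hcoeff : (-b)*(3/r₁) < 0 := mul_neg_of_neg_of_pos (by linarith) hr₁3
      rcases mul_eq_zero.1 hU with h | h
      · exact absurd h hcoeff.ne
      · exact h
    · exfalso; rw [hau, zero_mul] at hab; exact lt_irrefl (0:ℝ) hab
    · -- a > 0, b < 0, A > 0
      have hApos : 0 < A := by
        by_contra h; push_neg at h
        have := mul_nonpos_of_nonneg_of_nonpos hau.le h
        linarith
      have hbneg : b < 0 := by
        by_contra h; push_neg at h
        have := mul_nonneg hau.le h
        linarith
      have t1 : 0 ≤ (-(a*b))*A :=
        mul_nonneg (by linarith) hApos.le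
      have h1 : -((-(a*b))*A*(w₁*r₁/B + a + (w₂*r₂/B + b))) ≤ 0 := by
        have := mul_nonneg t1 hSnn
        linarith
      have h2 : 0 ≤ (-b)*(3/r₁)*J₁ :=
        mul_nonneg (mul_nonneg (by linarith) hr₁3.le) hJ₁nn
      have h3 : 0 ≤ a*(3/r₂)*J₂ :=
        mul_nonneg (mul_nonneg hau.le hr₂3.le) hJ₂nn
      have hU : (-b)*(3/r₁)*J₁ = 0 := by linarith [hcomb, hIpart, h1, h2, h3]
      have hcoeff : 0 < (-b)*(3/r₁) := mul_pos (by linarith) hr₁3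
      rcases mul_eq_zero.1 hU with h | h
      · exact absurd h hcoeff.ne'
      · exact h
  -- from J₁ = 0 conclude z₁ is constant on [0,T], contradiction with hcore₁
  have hz₁F₁ : ∀ t ∈ Icc (0:ℝ) T, z₁ t * F₁ t = 0 :=
    hzeroOf (fun t => z₁ t * F₁ t) (hcz₁.mul hcF₁) (by rw [← hJ₁]; exact hJzero)
  have hsq : ∀ t ∈ Icc (0:ℝ) T, (z₁ t)^2 = (z₁ 0)^2 := by
    have := hconstOf (fun t => (z₁ t)^2) (fun t => 2*(z₁ t * F₁ t))
      (fun t ht => by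
        have h := (hsol₁' t ht).pow 2
        refine HasDerivAt.congr_deriv h ?_
        push_cast; ring)
      (by fun_prop)
      (fun s hs => by show 2 * (z₁ s * F₁ s) = 0; rw [hz₁F₁ s hs]; ring)
    exact this
  have hz₁const : ∀ t ∈ Icc (0:ℝ) T, z₁ t = z₁ 0 := by
    intro t ht
    by_contra hne
    have h2 : (z₁ t)^2 = (z₁ 0)^2 := hsq t ht
    have hfac : (z₁ t - z₁ 0) * (z₁ t + z₁ 0) = 0 := by linear_combination h2
    have hneq : z₁ t = -(z₁ 0) := by
      rcases mul_eq_zero.1 hfac with h | h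
      · exact absurd (by linarith : z₁ t = z₁ 0) hne
      · linarith
    have h00 : z₁ 0 ≠ 0 := by
      intro h
      apply hne; rw [h] at hneq ⊢; simpa using hneq
    have hmem : (0:ℝ) ∈ uIcc (z₁ 0) (z₁ t) := by
      rw [hneq, Set.mem_uIcc]
      rcases le_total (z₁ 0) 0 with h | h
      · exact Or.inl ⟨h, by linarith⟩
      · exact Or.inr ⟨by linarith, h⟩
    obtain ⟨s, hs, hz₁s⟩ := intermediate_value_uIcc (a := 0) (b := t) hcz₁.continuousOn hmem
    rw [uIcc_of_le ht.1] at hs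
    have hsv : (z₁ s)^2 = (z₁ 0)^2 := hsq s ⟨hs.1, hs.2.trans ht.2⟩
    rw [hz₁s] at hsv
    have hz0 : (z₁ 0)^2 = 0 := by rw [← hsv]; norm_num
    exact h00 (pow_eq_zero_iff (by norm_num : (2:ℕ) ≠ 0) |>.1 hz0)
  exact hcore₁ hz₁const
end

section
/- (Purely imaginary eigenvalues of the Jacobian at the Hopf bifurcation point) Consider the two-agent opinion dynamics and suppose the self functions' unique roots coincide: m_1 = m_2 = m. Define g := r_1/B > 0, d := c_1 r_2/B, κ_i := w_i r_i/B + 3m²/r_i > 0 for i ∈ {1,2}, and c_2* := −(κ_1 + κ_2 + d)/g. Assume d·(κ_2 − κ_1) − κ_1² > 0. Then the Jacobian matrix of the two-agent vector field evaluated at the consensus equilibrium (m, m) with c_2 = c_2*, namely J = [[−κ_1 − d, d], [g c_2*, −κ_2 − g c_2*]], has trace zero and determinant d·(κ_2 − κ_1) − κ_1² > 0; consequently its eigenvalues form a nonzero purely imaginary conjugate pair. -/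
open Polynomial in
lemma charpoly_fin_two_aux {R : Type*} [CommRing R] (M : Matrix (Fin 2) (Fin 2) R) :
    M.charpoly = X ^ 2 - C M.trace * X + C M.det := by
  rw [Matrix.charpoly, Matrix.det_fin_two, Matrix.charmatrix_apply_eq,
    Matrix.charmatrix_apply_eq, Matrix.charmatrix_apply_ne _ _ _ (by decide),
    Matrix.charmatrix_apply_ne _ _ _ (by decide), Matrix.trace_fin_two, Matrix.det_fin_two]
  simp only [map_add, map_mul, map_sub]
  ring

/-- Purely imaginary eigenvalues of the Jacobian of the two-agent opinion dynamics at
the consensus equilibrium `(m, m)` for the Hopf bifurcation value `c₂ = c₂*`: the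
Jacobian has trace zero and determinant `d(κ₂ − κ₁) − κ₁² > 0`, so its eigenvalues
form a nonzero purely imaginary conjugate pair `±iω`. -/
theorem hopf_jacobian_purely_imaginary_eigenvalues
    (w₁ w₂ r₁ r₂ : ℝ) (hw₁ : 0 < w₁) (hw₂ : 0 < w₂) (hr₁ : 0 < r₁) (hr₂ : 0 < r₂)
    (c₁ p₁ p₂ : ℝ) (B : ℝ) (hB : B = r₁ + r₂)
    (m : ℝ)
    (hm₁ : -(w₁ * r₁ / B) * (m - p₁) - m ^ 3 / r₁ = 0)
    (hm₂ : -(w₂ * r₂ / B) * (m - p₂) - m ^ 3 / r₂ = 0)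
    (g d κ₁ κ₂ c₂star : ℝ)
    (hg : g = r₁ / B) (hd : d = c₁ * r₂ / B)
    (hκ₁ : κ₁ = w₁ * r₁ / B + 3 * m ^ 2 / r₁)
    (hκ₂ : κ₂ = w₂ * r₂ / B + 3 * m ^ 2 / r₂)
    (hc₂star : c₂star = -(κ₁ + κ₂ + d) / g)
    (hpos : 0 < d * (κ₂ - κ₁) - κ₁ ^ 2)
    (J : Matrix (Fin 2) (Fin 2) ℝ)
    (hJ : J = !![-κ₁ - d, d; g * c₂star, -κ₂ - g * c₂star]) :
    Matrix.trace J = 0 ∧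
    J.det = d * (κ₂ - κ₁) - κ₁ ^ 2 ∧ 0 < J.det ∧
    ∃ ω : ℝ, ω ≠ 0 ∧ ∀ μ : ℂ,
      (J.map (algebraMap ℝ ℂ)).charpoly.IsRoot μ ↔
        (μ = (ω : ℂ) * Complex.I ∨ μ = -((ω : ℂ) * Complex.I)) := by
  have hBpos : 0 < B := by rw [hB]; positivity
  have hgpos : 0 < g := by rw [hg]; positivity
  have hgc : g * c₂star = -(κ₁ + κ₂ + d) := by
    rw [hc₂star]; field_simp
  have htr : Matrix.trace J = 0 := by
    rw [hJ, Matrix.trace_fin_two_of, hgc]; ring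
  have hdet : J.det = d * (κ₂ - κ₁) - κ₁ ^ 2 := by
    rw [hJ, Matrix.det_fin_two_of]
    rw [hgc]; ring
  refine ⟨htr, hdet, hdet ▸ hpos, Real.sqrt (d * (κ₂ - κ₁) - κ₁ ^ 2), ?_, ?_⟩
  · exact ne_of_gt (Real.sqrt_pos.mpr hpos)
  · intro μ
    set ω : ℝ := Real.sqrt (d * (κ₂ - κ₁) - κ₁ ^ 2) with hω
    have hω2 : (ω : ℝ) ^ 2 = d * (κ₂ - κ₁) - κ₁ ^ 2 :=
      Real.sq_sqrt hpos.le
    have hcpR : J.charpoly = Polynomial.X ^ 2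
        + Polynomial.C (d * (κ₂ - κ₁) - κ₁ ^ 2) := by
      rw [charpoly_fin_two_aux, htr, hdet, map_zero, zero_mul, sub_zero]
    have hroot : (J.map (algebraMap ℝ ℂ)).charpoly.IsRoot μ ↔
        μ ^ 2 + ((d * (κ₂ - κ₁) - κ₁ ^ 2 : ℝ) : ℂ) = 0 := by
      rw [Matrix.charpoly_map, hcpR, Polynomial.IsRoot]
      simp
    rw [hroot]
    have hfact : μ ^ 2 + ((d * (κ₂ - κ₁) - κ₁ ^ 2 : ℝ) : ℂ) =
        (μ - (ω : ℂ) * Complex.I) * (μ + (ω : ℂ) * Complex.I) := by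
      have : ((ω : ℂ)) ^ 2 = ((d * (κ₂ - κ₁) - κ₁ ^ 2 : ℝ) : ℂ) := by
        rw [← Complex.ofReal_pow, hω2]
      rw [← this]
      have hI : Complex.I ^ 2 = -1 := Complex.I_sq
      ring_nf
      rw [hI]
      ring
    rw [hfact, mul_eq_zero, sub_eq_zero, add_eq_zero_iff_eq_neg]
end
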